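/- Let W be a regular reachability objective over C and M a finite chromatic memory structure. Then M suffices to play optimally for W in all arenas (of any cardinality) if and only if W is M-strongly-monotone and M-progress-consistent. -/

import Mathlib

set_option autoImplicit false

namespace RegularMemory

/-- Concatenation of a finite word with an infinite word. -/
def wcat {C : Type} (w : List C) (x : ℕ → C) : ℕ → C := fun n =>
  if h : n < w.length then w.get ⟨n, h⟩ else x (n - w.length)

/-- The infinite word `w^ω` (junk value if `w` is empty). -/
noncomputable def wpow {C : Type} [Nonempty C] : List C → ℕ → C
  | [] => fun _ => Classical.arbitrary C
  | (a :: l) => fun n => (a :: l).get ⟨n % (a :: l).length, Nat.mod_lt n (Nat.succ_pos _)⟩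

/-- Winning continuations `w⁻¹W` of the finite word `w` for the objective `W`. -/
def contAfter {C : Type} (W : Set (ℕ → C)) (w : List C) : Set (ℕ → C) :=
  {x | wcat w x ∈ W}

/-- Prefix preorder `w₁ ⪯_W w₂`. -/
def prefLe {C : Type} (W : Set (ℕ → C)) (w₁ w₂ : List C) : Prop :=
  contAfter W w₁ ⊆ contAfter W w₂

/-- Strict prefix relation `w₁ ≺_W w₂`. -/
def prefLt {C : Type} (W : Set (ℕ → C)) (w₁ w₂ : List C) : Prop :=
  prefLe W w₁ w₂ ∧ ¬ prefLe W w₂ w₁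

/-- Comparability for the prefix preorder. -/
def PrefComparable {C : Type} (W : Set (ℕ → C)) (w₁ w₂ : List C) : Prop :=
  prefLe W w₁ w₂ ∨ prefLe W w₂ w₁

/-- The general reachability objective derived from `A`: infinite words with a prefix in `A`. -/
def ReachObj {C : Type} (A : Set (List C)) : Set (ℕ → C) :=
  {x | ∃ n : ℕ, (List.ofFn fun i : Fin n => x i) ∈ A}

/-- The general safety objective derived from `A`. -/
def SafeObj {C : Type} (A : Set (List C)) : Set (ℕ → C) :=
  (ReachObj A)ᶜ

/-- The prefix preorder of `W` has finitely many equivalence classes. -/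
def FinClasses {C : Type} (W : Set (ℕ → C)) : Prop :=
  (Set.range fun w : List C => contAfter W w).Finite

/-- The prefix preorder of `W` is well-founded:
every nonempty chain contains a minimal element. -/
def PrefWellFounded {C : Type} (W : Set (ℕ → C)) : Prop :=
  ∀ S : Set (List C), S.Nonempty →
    (∀ w₁ ∈ S, ∀ w₂ ∈ S, PrefComparable W w₁ w₂) →
    ∃ w₀ ∈ S, ∀ w ∈ S, ¬ prefLt W w w₀

/-- Chromatic memory structure. -/
structure MemStruct (C : Type) where
  M : Type
  init : M
  upd : M → C → M

/-- Extension of the update function to finite words. -/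
def MemStruct.updStar {C : Type} (N : MemStruct C) (m : N.M) (w : List C) : N.M :=
  w.foldl N.upd m

/-- The trivial one-state memory structure. -/
def trivMem (C : Type) : MemStruct C :=
  ⟨Unit, (), fun _ _ => ()⟩

/-- `W` is `N`-strongly-monotone. -/
def StronglyMonotone {C : Type} (N : MemStruct C) (W : Set (ℕ → C)) : Prop :=
  ∀ w₁ w₂ : List C,
    N.updStar N.init w₁ = N.updStar N.init w₂ → PrefComparable W w₁ w₂

/-- `W` is `N`-progress-consistent. -/
def ProgressConsistent {C : Type} [Nonempty C] (N : MemStruct C) (W : Set (ℕ → C)) : Prop :=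
  ∀ (m : N.M) (w₁ w₂ : List C),
    N.updStar N.init w₁ = m → N.updStar m w₂ = m →
    prefLt W w₁ (w₁ ++ w₂) → wcat w₁ (wpow w₂) ∈ W

/-- Two-player arena with colored edges; Player-1 vertices have outgoing edges
(so that strategies of Player 1 exist). -/
structure Arena (C : Type) where
  V : Type
  P1 : V → Prop
  E : Set (V × C × V)
  succ : ∀ v : V, P1 v → ∃ e ∈ E, e.1 = v

namespace Arena

/-- Valid histories starting at a given vertex. -/
def HistFrom {C : Type} (A : Arena C) : A.V → List (A.V × C × A.V) → Prop
  | _, [] => True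
  | v, e :: l => e ∈ A.E ∧ e.1 = v ∧ HistFrom A e.2.2 l

/-- Endpoint of a history. -/
def endFrom {C : Type} (A : Arena C) : A.V → List (A.V × C × A.V) → A.V
  | v, [] => v
  | _, e :: l => endFrom A e.2.2 l

/-- Infinite plays from a vertex. -/
def PlayFrom {C : Type} (A : Arena C) (v : A.V) (π : ℕ → A.V × C × A.V) : Prop :=
  (π 0).1 = v ∧ ∀ n : ℕ, π n ∈ A.E ∧ (π n).2.2 = (π (n + 1)).1

/-- Colors along a play. -/
def playCol {C V : Type} (π : ℕ → V × C × V) : ℕ → C :=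
  fun n => (π n).2.1

/-- Strategies of Player 1: on every valid history ending in a Player-1 vertex,
the strategy picks an edge leaving that vertex. -/
structure Strategy {C : Type} (A : Arena C) where
  next : A.V → List (A.V × C × A.V) → A.V × C × A.V
  legal : ∀ (v : A.V) (l : List (A.V × C × A.V)),
    A.HistFrom v l → A.P1 (A.endFrom v l) →
      next v l ∈ A.E ∧ (next v l).1 = A.endFrom v l

/-- A play from `v` is consistent with the strategy `σ`. -/
def Strategy.Consistent {C : Type} {A : Arena C} (σ : A.Strategy) (v : A.V)
    (π : ℕ → A.V × C × A.V) : Prop :=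
  ∀ n : ℕ, A.P1 (A.endFrom v (List.ofFn fun i : Fin n => π i)) →
    π n = σ.next v (List.ofFn fun i : Fin n => π i)

/-- `σ` is winning from `v` for the objective `W`. -/
def Strategy.WinningFrom {C : Type} {A : Arena C} (σ : A.Strategy)
    (W : Set (ℕ → C)) (v : A.V) : Prop :=
  ∀ π : ℕ → A.V × C × A.V, A.PlayFrom v π → σ.Consistent v π → playCol π ∈ W

/-- `σ` is optimal in `(A, W)`: winning from every vertex from which
Player 1 has some winning strategy. -/
def Strategy.Optimal {C : Type} {A : Arena C} (σ : A.Strategy) (W : Set (ℕ → C)) : Prop :=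
  ∀ v : A.V, (∃ σ' : A.Strategy, σ'.WinningFrom W v) → σ.WinningFrom W v

/-- `σ` is based on the memory structure `N`. -/
def Strategy.BasedOn {C : Type} {A : Arena C} (σ : A.Strategy) (N : MemStruct C) : Prop :=
  ∃ nxt : A.V → N.M → A.V × C × A.V,
    ∀ (v : A.V) (l : List (A.V × C × A.V)),
      A.HistFrom v l → A.P1 (A.endFrom v l) →
        σ.next v l = nxt (A.endFrom v l) (N.updStar N.init (l.map fun e => e.2.1))

/-- Finite arena: finitely many vertices and edges. -/
def IsFinite {C : Type} (A : Arena C) : Prop := Finite A.V ∧ A.E.Finite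

/-- Finitely branching arena. -/
def FinBranching {C : Type} (A : Arena C) : Prop :=
  ∀ v : A.V, {e ∈ A.E | e.1 = v}.Finite

/-- One-player arena of Player 1. -/
def OneP1 {C : Type} (A : Arena C) : Prop := ∀ v : A.V, A.P1 v

end Arena

/-- `N` suffices to play optimally for `W` in all arenas of the class `P`. -/
def SufficesIn {C : Type} (N : MemStruct C) (W : Set (ℕ → C))
    (P : Arena C → Prop) : Prop :=
  ∀ A : Arena C, P A → ∃ σ : A.Strategy, σ.BasedOn N ∧ σ.Optimal W

/-- Deterministic automaton (with complete transition function). -/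
structure DetAuto (C : Type) where
  Q : Type
  init : Q
  δ : Q → C → Q
  F : Set Q

/-- Extension of the transition function to finite words. -/
def DetAuto.δStar {C : Type} (D : DetAuto C) (q : D.Q) (w : List C) : D.Q :=
  w.foldl D.δ q

/-- Language recognized by `D`. -/
def DetAuto.lang {C : Type} (D : DetAuto C) : Set (List C) :=
  {w | D.δStar D.init w ∈ D.F}

/-- Prefix preorder extended to automaton states. -/
def statePrefLe {C : Type} (D : DetAuto C) (W : Set (ℕ → C)) (q₁ q₂ : D.Q) : Prop :=
  ∀ w₁ w₂ : List C,
    D.δStar D.init w₁ = q₁ → D.δStar D.init w₂ = q₂ → prefLe W w₁ w₂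

def statePrefLt {C : Type} (D : DetAuto C) (W : Set (ℕ → C)) (q₁ q₂ : D.Q) : Prop :=
  statePrefLe D W q₁ q₂ ∧ ¬ statePrefLe D W q₂ q₁

def StateComparable {C : Type} (D : DetAuto C) (W : Set (ℕ → C)) (q₁ q₂ : D.Q) : Prop :=
  statePrefLe D W q₁ q₂ ∨ statePrefLe D W q₂ q₁

/-- Monotone decomposition of `D` with `k` sets. -/
def MonotoneDecomposition {C : Type} (D : DetAuto C) (W : Set (ℕ → C))
    {k : ℕ} (Γ : Fin k → Set D.Q) : Prop :=
  (∀ q : D.Q, ∃ i : Fin k, q ∈ Γ i) ∧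
  (∀ (c : C) (i : Fin k), ∃ j : Fin k, (fun q => D.δ q c) '' Γ i ⊆ Γ j) ∧
  (∀ i : Fin k, ∀ q₁ ∈ Γ i, ∀ q₂ ∈ Γ i, StateComparable D W q₁ q₂)

end RegularMemory
namespace RegularMemory

section Words

variable {C : Type}

/-- Finite prefix of an infinite word. -/
def pref (x : ℕ → C) (n : ℕ) : List C := List.ofFn fun i : Fin n => x i

@[simp] lemma pref_zero (x : ℕ → C) : pref x 0 = [] := rfl

@[simp] lemma pref_length (x : ℕ → C) (n : ℕ) : (pref x n).length = n := by
  simp [pref]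

lemma pref_getElem (x : ℕ → C) (n i : ℕ) (h : i < (pref x n).length) :
    (pref x n)[i] = x i := by
  simp [pref]

lemma pref_succ (x : ℕ → C) (n : ℕ) :
    pref x (n + 1) = pref x n ++ [x n] := by
  simpa [pref, List.concat_eq_append] using List.ofFn_succ' (fun i : Fin (n+1) => x i)

lemma pref_add (x : ℕ → C) (a j : ℕ) :
    pref x (a + j) = pref x a ++ List.ofFn (fun i : Fin j => x (a + i)) := by
  induction j with
  | zero => simp
  | succ j ih =>
    have : a + (j + 1) = (a + j) + 1 := by omega
    rw [this, pref_succ, ih]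
    have : (List.ofFn fun i : Fin (j+1) => x (a + i))
        = (List.ofFn fun i : Fin j => x (a + i)) ++ [x (a + j)] := by
      simpa [List.concat_eq_append] using
        List.ofFn_succ' (fun i : Fin (j+1) => x (a + i))
    rw [this, List.append_assoc]

lemma wcat_lt {w : List C} {x : ℕ → C} {n : ℕ} (h : n < w.length) :
    wcat w x n = w[n] := by
  simp [wcat, h]

lemma wcat_ge {w : List C} {x : ℕ → C} {n : ℕ} (h : ¬ n < w.length) :
    wcat w x n = x (n - w.length) := by
  simp [wcat, h]

@[simp] lemma wcat_nil (x : ℕ → C) : wcat [] x = x := by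
  funext n; simp [wcat]

lemma wcat_append (w₁ w₂ : List C) (x : ℕ → C) :
    wcat (w₁ ++ w₂) x = wcat w₁ (wcat w₂ x) := by
  funext n
  by_cases h1 : n < w₁.length
  · have h : n < (w₁ ++ w₂).length := by simp; omega
    rw [wcat_lt h, wcat_lt h1, List.getElem_append_left h1]
  · rw [wcat_ge h1]
    by_cases h2 : n - w₁.length < w₂.length
    · have h : n < (w₁ ++ w₂).length := by simp; omega
      rw [wcat_lt h, wcat_lt h2, List.getElem_append_right (by omega)]
    · have h : ¬ n < (w₁ ++ w₂).length := by simp; omega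
      rw [wcat_ge h, wcat_ge h2]
      congr 1
      simp; omega

lemma wcat_pref_shift (x : ℕ → C) (k : ℕ) :
    wcat (pref x k) (fun i => x (k + i)) = x := by
  funext n
  by_cases h : n < k
  · rw [wcat_lt (by simpa using h)]
    exact pref_getElem x k n (by simpa using h)
  · rw [wcat_ge (by simpa using h)]
    simp only [pref_length]
    congr 1; omega

/-- One-step residual on sets of infinite words. -/
def dstep (S : Set (ℕ → C)) (c : C) : Set (ℕ → C) := {x | wcat [c] x ∈ S}

/-- Multistep residual. -/
def dlist (S : Set (ℕ → C)) (u : List C) : Set (ℕ → C) := u.foldl dstep S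

@[simp] lemma dlist_nil (S : Set (ℕ → C)) : dlist S [] = S := rfl

@[simp] lemma dlist_cons (S : Set (ℕ → C)) (c : C) (u : List C) :
    dlist S (c :: u) = dlist (dstep S c) u := rfl

lemma dlist_append (S : Set (ℕ → C)) (a b : List C) :
    dlist S (a ++ b) = dlist (dlist S a) b := by
  simp [dlist, List.foldl_append]

lemma dstep_mono {S S' : Set (ℕ → C)} (h : S ⊆ S') (c : C) : dstep S c ⊆ dstep S' c :=
  fun _ hx => h hx

lemma dlist_mono {S S' : Set (ℕ → C)} (h : S ⊆ S') (u : List C) :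
    dlist S u ⊆ dlist S' u := by
  induction u generalizing S S' with
  | nil => simpa using h
  | cons c u ih => simpa using ih (dstep_mono h c)

@[simp] lemma dstep_univ (c : C) : dstep (Set.univ : Set (ℕ → C)) c = Set.univ := by
  ext x; simp [dstep]

@[simp] lemma dlist_univ (u : List C) : dlist (Set.univ : Set (ℕ → C)) u = Set.univ := by
  induction u with
  | nil => rfl
  | cons c u ih => simpa using ih

lemma contAfter_snoc (W : Set (ℕ → C)) (w : List C) (c : C) :
    contAfter W (w ++ [c]) = dstep (contAfter W w) c := by
  ext x
  simp only [contAfter, dstep, Set.mem_setOf_eq, wcat_append]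

lemma contAfter_append (W : Set (ℕ → C)) (w u : List C) :
    contAfter W (w ++ u) = dlist (contAfter W w) u := by
  induction u generalizing w with
  | nil => simp
  | cons c u ih =>
    have : w ++ c :: u = (w ++ [c]) ++ u := by simp
    rw [this, ih, contAfter_snoc, dlist_cons]

lemma mem_contAfter (W : Set (ℕ → C)) (w : List C) (x : ℕ → C) :
    x ∈ contAfter W w ↔ wcat w x ∈ W := Iff.rfl

lemma contAfter_univ_absorb (W : Set (ℕ → C)) {w : List C} (h : contAfter W w = Set.univ)
    (u : List C) : contAfter W (w ++ u) = Set.univ := by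
  rw [contAfter_append, h, dlist_univ]

lemma pref_take {x : ℕ → C} {a b : ℕ} (h : a ≤ b) :
    (pref x b).take a = pref x a := by
  apply List.ext_getElem
  · simp; omega
  · intro i h1 h2
    rw [List.getElem_take]
    rw [pref_getElem, pref_getElem]

lemma pref_wcat_le {u : List C} {y : ℕ → C} {n : ℕ} (h : n ≤ u.length) :
    pref (wcat u y) n = u.take n := by
  apply List.ext_getElem
  · simp; omega
  · intro i h1 h2
    rw [List.getElem_take, pref_getElem]
    exact wcat_lt (by simp at h1; omega)

lemma pref_wcat_full (u : List C) (y : ℕ → C) (k : ℕ) :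
    pref (wcat u y) (u.length + k) = u ++ pref y k := by
  apply List.ext_getElem
  · simp
  · intro i h1 h2
    rw [pref_getElem]
    by_cases h : i < u.length
    · rw [List.getElem_append_left h, wcat_lt h]
    · rw [List.getElem_append_right (by omega), wcat_ge h, pref_getElem]

/-- Central lemma for reachability objectives: `x` is a winning continuation of `w`
iff some finite prefix extension has all continuations winning. -/
lemma mem_contAfter_iff_reach {A₀ : Set (List C)} {W : Set (ℕ → C)} (hW : W = ReachObj A₀)
    (w : List C) (x : ℕ → C) :
    x ∈ contAfter W w ↔ ∃ k, contAfter W (w ++ pref x k) = Set.univ := by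
  constructor
  · intro hx
    rw [mem_contAfter, hW] at hx
    obtain ⟨n₀, hp⟩ := hx
    set k := n₀ - w.length with hk
    refine ⟨k, ?_⟩
    have hn₀ : n₀ ≤ w.length + k := by omega
    apply Set.eq_univ_of_forall
    intro y
    rw [mem_contAfter, hW]
    refine ⟨n₀, ?_⟩
    have h1 : (List.ofFn fun i : Fin n₀ => wcat (w ++ pref x k) y i)
        = (w ++ pref x k).take n₀ := pref_wcat_le (by simp; omega)
    have h2 : (w ++ pref x k).take n₀ = (List.ofFn fun i : Fin n₀ => wcat w x i) := by
      rw [← pref_wcat_full w x k]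
      exact pref_take hn₀
    show (List.ofFn fun i : Fin n₀ => wcat (w ++ pref x k) y i) ∈ A₀
    rw [h1, h2]
    exact hp
  · rintro ⟨k, hk⟩
    rw [mem_contAfter]
    have : wcat (w ++ pref x k) (fun i => x (k + i)) ∈ W := by
      have : (fun i => x (k + i)) ∈ contAfter W (w ++ pref x k) := by
        rw [hk]; trivial
      exact this
    rwa [wcat_append, wcat_pref_shift] at this

lemma mem_W_of_pref_univ {W : Set (ℕ → C)} {x : ℕ → C} {n : ℕ}
    (h : contAfter W (pref x n) = Set.univ) : x ∈ W := by
  have : (fun i => x (n + i)) ∈ contAfter W (pref x n) := by rw [h]; trivial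
  rw [mem_contAfter, wcat_pref_shift] at this
  exact this

lemma mem_W_iff_reach {A₀ : Set (List C)} {W : Set (ℕ → C)} (hW : W = ReachObj A₀)
    (x : ℕ → C) : x ∈ W ↔ ∃ k, contAfter W (pref x k) = Set.univ := by
  have := mem_contAfter_iff_reach hW [] x
  simp only [mem_contAfter, wcat_nil, List.nil_append] at this
  exact this

end Words

section Pow

variable {C : Type} [Nonempty C]

/-- `u` repeated `k` times. -/
def upow (u : List C) : ℕ → List C
  | 0 => []
  | k + 1 => upow u k ++ u

@[simp] lemma upow_length (u : List C) (k : ℕ) : (upow u k).length = k * u.length := by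
  induction k with
  | zero => simp [upow]
  | succ k ih => simp [upow, ih]; ring

lemma wpow_eq_get {u : List C} (hu : u ≠ []) (n : ℕ) (h : n % u.length < u.length) :
    wpow u n = u[n % u.length] := by
  match u, hu with
  | (a :: l), _ => simp [wpow]

lemma upow_getElem (u : List C) (k i : ℕ) (h : i < (upow u k).length)
    (h2 : i % u.length < u.length) :
    (upow u k)[i] = u[i % u.length] := by
  induction k with
  | zero => simp [upow] at h
  | succ k ih =>
    simp only [upow]
    by_cases hi : i < (upow u k).length
    · rw [List.getElem_append_left hi, ih]
    · have hlen : (upow u k).length = k * u.length := upow_length u k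
      have hl : (upow u k).length ≤ i := by omega
      rw [List.getElem_append_right hl]
      have hup : i < (upow u (k+1)).length := h
      rw [upow_length, Nat.succ_mul] at hup
      have hlt : i - (upow u k).length < u.length := by
        rw [hlen]; omega
      congr 1
      rw [hlen]
      conv_rhs => rw [show i = k * u.length + (i - k * u.length) by omega]
      rw [Nat.mul_add_mod']
      rw [Nat.mod_eq_of_lt (by omega)]

lemma pref_wpow_take {u : List C} (hu : u ≠ []) (k : ℕ) :
    pref (wpow u) k = (upow u k).take k := by
  have hul : 0 < u.length := List.length_pos_iff.mpr hu
  have hk : k ≤ k * u.length := Nat.le_mul_of_pos_right k hul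
  apply List.ext_getElem
  · simp; omega
  · intro i h1 h2
    rw [pref_getElem, List.getElem_take]
    have hm : i % u.length < u.length := Nat.mod_lt _ hul
    rw [upow_getElem u k i (by simp at h2 ⊢; omega) hm]
    exact wpow_eq_get hu i hm

lemma pref_wpow_mul {u : List C} (hu : u ≠ []) (j : ℕ) :
    pref (wpow u) (j * u.length) = upow u j := by
  have hul : 0 < u.length := List.length_pos_iff.mpr hu
  apply List.ext_getElem
  · simp
  · intro i h1 h2
    rw [pref_getElem]
    have hm : i % u.length < u.length := Nat.mod_lt _ hul
    rw [upow_getElem u j i h2 hm]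
    exact wpow_eq_get hu i hm

lemma dlist_upow_self {q : Set (ℕ → C)} {u : List C} (h : dlist q u = q) (k : ℕ) :
    dlist q (upow u k) = q := by
  induction k with
  | zero => rfl
  | succ k ih => rw [upow, dlist_append, ih, h]

lemma updStar_append {N : MemStruct C} (m : N.M) (a b : List C) :
    N.updStar m (a ++ b) = N.updStar (N.updStar m a) b := by
  simp [MemStruct.updStar, List.foldl_append]

end Pow

end RegularMemory
namespace RegularMemory

section Attractor

variable {C : Type} (W : Set (ℕ → C)) (A : Arena C)

/-- Configurations from which Player 1 can force the current residual to become `univ`,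
by attractor stage `α`. -/
def AttrAt : Ordinal.{0} → A.V → Set (ℕ → C) → Prop :=
  @WellFounded.fix Ordinal.{0} (fun _ => A.V → Set (ℕ → C) → Prop) (· < ·)
    Ordinal.lt_wf fun α rec =>
    fun v S =>
      S = Set.univ ∨
      (A.P1 v ∧ ∃ e, e ∈ A.E ∧ e.1 = v ∧
        ∃ β, ∃ h : β < α, rec β h e.2.2 (dstep S e.2.1)) ∨
      (¬ A.P1 v ∧ ∀ e, e ∈ A.E → e.1 = v →
        ∃ β, ∃ h : β < α, rec β h e.2.2 (dstep S e.2.1))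

lemma attrAt_iff (α : Ordinal) (v : A.V) (S : Set (ℕ → C)) :
    AttrAt A α v S ↔
      (S = Set.univ ∨
      (A.P1 v ∧ ∃ e, e ∈ A.E ∧ e.1 = v ∧
        ∃ β, β < α ∧ AttrAt A β e.2.2 (dstep S e.2.1)) ∨
      (¬ A.P1 v ∧ ∀ e, e ∈ A.E → e.1 = v →
        ∃ β, β < α ∧ AttrAt A β e.2.2 (dstep S e.2.1))) := by
  have h := @WellFounded.fix_eq Ordinal.{0} (fun _ => A.V → Set (ℕ → C) → Prop) (· < ·)
    Ordinal.lt_wf (fun α rec =>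
    fun v S =>
      S = Set.univ ∨
      (A.P1 v ∧ ∃ e, e ∈ A.E ∧ e.1 = v ∧
        ∃ β, ∃ h : β < α, rec β h e.2.2 (dstep S e.2.1)) ∨
      (¬ A.P1 v ∧ ∀ e, e ∈ A.E → e.1 = v →
        ∃ β, ∃ h : β < α, rec β h e.2.2 (dstep S e.2.1))) α
  constructor
  · intro hh
    rw [AttrAt, h] at hh
    simp only [exists_prop] at hh
    exact hh
  · intro hh
    rw [AttrAt, h]
    simp only [exists_prop]
    exact hh

/-- Attractor membership. -/
def Attr (v : A.V) (S : Set (ℕ → C)) : Prop := ∃ α, AttrAt A α v S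

/-- Attractor rank. -/
noncomputable def rk (v : A.V) (S : Set (ℕ → C)) : Ordinal.{0} :=
  sInf {α | AttrAt A α v S}

variable {A}

lemma attr_univ {S : Set (ℕ → C)} (h : S = Set.univ) (v : A.V) : Attr A v S :=
  ⟨0, (attrAt_iff A 0 v S).mpr (Or.inl h)⟩

lemma rk_attrAt {v : A.V} {S : Set (ℕ → C)} (h : Attr A v S) : AttrAt A (rk A v S) v S :=
  csInf_mem h

lemma rk_le {v : A.V} {S : Set (ℕ → C)} {α : Ordinal} (h : AttrAt A α v S) :
    rk A v S ≤ α :=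
  csInf_le (OrderBot.bddBelow _) h

lemma attrAt_mono_set : ∀ (α : Ordinal) (v : A.V) (S S' : Set (ℕ → C)), S ⊆ S' →
    AttrAt A α v S → AttrAt A α v S' := by
  intro α
  induction α using Ordinal.induction with
  | _ α ih =>
    intro v S S' hss h
    rw [attrAt_iff] at h ⊢
    rcases h with h | ⟨h1, e, he, hsrc, β, hβ, hA⟩ | ⟨h1, h2⟩
    · left; rw [h] at hss; exact Set.univ_subset_iff.mp hss
    · exact Or.inr (Or.inl ⟨h1, e, he, hsrc, β, hβ, ih β hβ _ _ _ (dstep_mono hss _) hA⟩)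
    · refine Or.inr (Or.inr ⟨h1, fun e he hsrc => ?_⟩)
      obtain ⟨β, hβ, hA⟩ := h2 e he hsrc
      exact ⟨β, hβ, ih β hβ _ _ _ (dstep_mono hss _) hA⟩

lemma attr_mono_set {v : A.V} {S S' : Set (ℕ → C)} (hss : S ⊆ S') (h : Attr A v S) :
    Attr A v S' := by
  obtain ⟨α, h⟩ := h
  exact ⟨α, attrAt_mono_set α v S S' hss h⟩

lemma rk_antitone {v : A.V} {S S' : Set (ℕ → C)} (hss : S ⊆ S') (h : Attr A v S) :
    rk A v S' ≤ rk A v S :=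
  rk_le (attrAt_mono_set _ v S S' hss (rk_attrAt h))

lemma attr_p1_step {v : A.V} {S : Set (ℕ → C)} (h : Attr A v S) (h1 : A.P1 v)
    (hS : S ≠ Set.univ) :
    ∃ e, e ∈ A.E ∧ e.1 = v ∧ Attr A e.2.2 (dstep S e.2.1) ∧
      rk A e.2.2 (dstep S e.2.1) < rk A v S := by
  have := (attrAt_iff A (rk A v S) v S).mp (rk_attrAt h)
  rcases this with h' | ⟨_, e, he, hsrc, β, hβ, hA⟩ | ⟨h1', _⟩
  · exact absurd h' hS
  · exact ⟨e, he, hsrc, ⟨β, hA⟩, lt_of_le_of_lt (rk_le hA) hβ⟩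
  · exact absurd h1 h1'

lemma attr_p2_step {v : A.V} {S : Set (ℕ → C)} (h : Attr A v S) (h1 : ¬ A.P1 v)
    (hS : S ≠ Set.univ) :
    ∀ e, e ∈ A.E → e.1 = v → Attr A e.2.2 (dstep S e.2.1) ∧
      rk A e.2.2 (dstep S e.2.1) < rk A v S := by
  intro e he hsrc
  have := (attrAt_iff A (rk A v S) v S).mp (rk_attrAt h)
  rcases this with h' | ⟨h1', _⟩ | ⟨_, h2⟩
  · exact absurd h' hS
  · exact absurd h1' h1
  · obtain ⟨β, hβ, hA⟩ := h2 e he hsrc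
    exact ⟨⟨β, hA⟩, lt_of_le_of_lt (rk_le hA) hβ⟩

lemma attr_p1_closure {v : A.V} {S : Set (ℕ → C)} (h1 : A.P1 v) {e : A.V × C × A.V}
    (he : e ∈ A.E) (hsrc : e.1 = v) (h : Attr A e.2.2 (dstep S e.2.1)) : Attr A v S := by
  refine ⟨rk A e.2.2 (dstep S e.2.1) + 1, (attrAt_iff A _ v S).mpr ?_⟩
  exact Or.inr (Or.inl ⟨h1, e, he, hsrc, rk A e.2.2 (dstep S e.2.1),
    Order.lt_succ _, rk_attrAt h⟩)

lemma attr_p2_closure {v : A.V} {S : Set (ℕ → C)} (h1 : ¬ A.P1 v)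
    (h : ∀ e, e ∈ A.E → e.1 = v → Attr A e.2.2 (dstep S e.2.1)) : Attr A v S := by
  classical
  set ι := {e : A.V × C × A.V // e ∈ A.E ∧ e.1 = v}
  refine ⟨Ordinal.lsub (fun e : ι => rk A e.1.2.2 (dstep S e.1.2.1)),
    (attrAt_iff A _ v S).mpr ?_⟩
  refine Or.inr (Or.inr ⟨h1, fun e he hsrc => ?_⟩)
  refine ⟨rk A e.2.2 (dstep S e.2.1), ?_, rk_attrAt (h e he hsrc)⟩
  exact Ordinal.lt_lsub (fun e : ι => rk A e.1.2.2 (dstep S e.1.2.1)) ⟨e, he, hsrc⟩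

lemma not_attr_p1 {v : A.V} {S : Set (ℕ → C)} (h1 : A.P1 v) (h : ¬ Attr A v S) :
    ∀ e, e ∈ A.E → e.1 = v → ¬ Attr A e.2.2 (dstep S e.2.1) :=
  fun e he hsrc hA => h (attr_p1_closure h1 he hsrc hA)

lemma not_attr_p2 {v : A.V} {S : Set (ℕ → C)} (h1 : ¬ A.P1 v) (h : ¬ Attr A v S) :
    ∃ e, e ∈ A.E ∧ e.1 = v ∧ ¬ Attr A e.2.2 (dstep S e.2.1) := by
  by_contra hc
  push_neg at hc
  exact h (attr_p2_closure h1 fun e he hsrc => hc e he hsrc)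

lemma attr_ne_univ {v : A.V} {S : Set (ℕ → C)} (h : ¬ Attr A v S) : S ≠ Set.univ :=
  fun hS => h (attr_univ hS v)

/-- No infinite descending sequence of ordinals. -/
lemma no_ordinal_descent (f : ℕ → Ordinal.{0}) : ¬ ∀ i, f (i + 1) < f i := by
  intro h
  obtain ⟨a, ⟨i, hi⟩, hmin⟩ := Ordinal.lt_wf.has_min (Set.range f) ⟨f 0, 0, rfl⟩
  exact hmin (f (i + 1)) ⟨i + 1, rfl⟩ (hi ▸ h i)

end Attractor

section ArenaLemmas

open Arena in
lemma _root_.RegularMemory.dummy_open : True := trivial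

open Arena

variable {C : Type} {A : Arena C}

lemma endFrom_append (v : A.V) (l : List (A.V × C × A.V)) (e : A.V × C × A.V) :
    A.endFrom v (l ++ [e]) = e.2.2 := by
  induction l generalizing v with
  | nil => rfl
  | cons e' l ih => exact ih e'.2.2

lemma histFrom_append {v : A.V} {l : List (A.V × C × A.V)} {e : A.V × C × A.V}
    (h : A.HistFrom v l) (he : e ∈ A.E) (hsrc : e.1 = A.endFrom v l) :
    A.HistFrom v (l ++ [e]) := by
  induction l generalizing v with
  | nil => exact ⟨he, hsrc, trivial⟩
  | cons e' l ih =>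
    obtain ⟨h1, h2, h3⟩ := h
    exact ⟨h1, h2, ih h3 hsrc⟩

lemma prefE_succ (π : ℕ → A.V × C × A.V) (n : ℕ) :
    (List.ofFn fun i : Fin (n+1) => π i) = (List.ofFn fun i : Fin n => π i) ++ [π n] := by
  simpa [List.concat_eq_append] using List.ofFn_succ' (fun i : Fin (n+1) => π (i : ℕ))

lemma play_prefix_hist {v : A.V} {π : ℕ → A.V × C × A.V} (hp : A.PlayFrom v π) :
    ∀ n, A.HistFrom v (List.ofFn fun i : Fin n => π i) ∧
      A.endFrom v (List.ofFn fun i : Fin n => π i) = (π n).1 := by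
  intro n
  induction n with
  | zero => exact ⟨trivial, hp.1.symm⟩
  | succ n ih =>
    rw [prefE_succ]
    refine ⟨histFrom_append ih.1 (hp.2 n).1 ih.2.symm, ?_⟩
    rw [endFrom_append, (hp.2 n).2]

lemma colors_prefE (π : ℕ → A.V × C × A.V) (n : ℕ) :
    (List.ofFn fun i : Fin n => π i).map (fun e => e.2.1) = pref (Arena.playCol π) n := by
  simp [pref, List.map_ofFn]; rfl

end ArenaLemmas

end RegularMemory
namespace RegularMemory

section Sufficiency

open Arena

variable {C : Type} [Nonempty C] {W : Set (ℕ → C)} {N : MemStruct C}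

section Strat

variable (W N) (A : Arena C)

/-- The set of residual classes realizable with memory state `m` and winnable from `v`. -/
def QW (v : A.V) (m : N.M) : Set (Set (ℕ → C)) :=
  {S | (∃ w : List C, N.updStar N.init w = m ∧ contAfter W w = S) ∧ Attr A v S}

variable {W N A}

lemma qw_chain (hSM : StronglyMonotone N W) {v : A.V} {m : N.M}
    {S S' : Set (ℕ → C)} (h : S ∈ QW W N A v m) (h' : S' ∈ QW W N A v m) :
    S ⊆ S' ∨ S' ⊆ S := by
  obtain ⟨⟨w, hw1, hw2⟩, _⟩ := h
  obtain ⟨⟨w', hw1', hw2'⟩, _⟩ := h'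
  have := hSM w w' (hw1.trans hw1'.symm)
  rcases this with h | h
  · left; rw [← hw2, ← hw2']; exact h
  · right; rw [← hw2, ← hw2']; exact h

lemma qw_least (hSM : StronglyMonotone N W) (hreg : FinClasses W) {v : A.V} {m : N.M}
    (hne : (QW W N A v m).Nonempty) :
    ∃ S ∈ QW W N A v m, ∀ S' ∈ QW W N A v m, S ⊆ S' := by
  have hsub : QW W N A v m ⊆ Set.range fun w : List C => contAfter W w := by
    rintro S ⟨⟨w, _, hw⟩, _⟩; exact ⟨w, hw⟩
  obtain ⟨S, hS, hmin⟩ :=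
    Set.Finite.exists_minimalFor id _ (hreg.subset hsub) hne
  refine ⟨S, hS, fun S' hS' => ?_⟩
  rcases qw_chain hSM hS hS' with h | h
  · exact h
  · exact hmin hS' h

variable (W N A)

open Classical in
/-- The minimal winnable residual class at `(v, m)` (junk if none). -/
noncomputable def pse (v : A.V) (m : N.M) : Set (ℕ → C) :=
  if h : ∃ S ∈ QW W N A v m, ∀ S' ∈ QW W N A v m, S ⊆ S' then h.choose else ∅

lemma pse_spec {v : A.V} {m : N.M} (hSM : StronglyMonotone N W) (hreg : FinClasses W)
    (hne : (QW W N A v m).Nonempty) :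
    pse W N A v m ∈ QW W N A v m ∧ ∀ S' ∈ QW W N A v m, pse W N A v m ⊆ S' := by
  have h : ∃ S ∈ QW W N A v m, ∀ S' ∈ QW W N A v m, S ⊆ S' := qw_least hSM hreg hne
  rw [pse, dif_pos h]
  exact ⟨h.choose_spec.1, h.choose_spec.2⟩

open Classical in
/-- The next-move function of the constructed strategy. -/
noncomputable def nxtF (v : A.V) (m : N.M) : A.V × C × A.V :=
  if h1 : A.P1 v then
    if h2 : ∃ e, e ∈ A.E ∧ e.1 = v ∧
        Attr A e.2.2 (dstep (pse W N A v m) e.2.1) ∧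
        rk A e.2.2 (dstep (pse W N A v m) e.2.1) < rk A v (pse W N A v m)
    then h2.choose
    else (A.succ v h1).choose
  else (v, Classical.arbitrary C, v)

lemma nxtF_legal {v : A.V} (m : N.M) (h1 : A.P1 v) :
    nxtF W N A v m ∈ A.E ∧ (nxtF W N A v m).1 = v := by
  classical
  rw [nxtF, dif_pos h1]
  split
  · next h2 => exact ⟨h2.choose_spec.1, h2.choose_spec.2.1⟩
  · next => obtain ⟨he, hsrc⟩ := (A.succ v h1).choose_spec; exact ⟨he, hsrc⟩

lemma nxtF_step {v : A.V} {m : N.M} (h1 : A.P1 v)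
    (h2 : ∃ e, e ∈ A.E ∧ e.1 = v ∧
        Attr A e.2.2 (dstep (pse W N A v m) e.2.1) ∧
        rk A e.2.2 (dstep (pse W N A v m) e.2.1) < rk A v (pse W N A v m)) :
    Attr A (nxtF W N A v m).2.2 (dstep (pse W N A v m) (nxtF W N A v m).2.1) ∧
      rk A (nxtF W N A v m).2.2 (dstep (pse W N A v m) (nxtF W N A v m).2.1) <
        rk A v (pse W N A v m) := by
  classical
  rw [nxtF, dif_pos h1, dif_pos h2]
  exact ⟨h2.choose_spec.2.2.1, h2.choose_spec.2.2.2⟩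

/-- The constructed strategy. -/
noncomputable def theStrat : A.Strategy where
  next v l := nxtF W N A (A.endFrom v l) (N.updStar N.init (l.map fun e => e.2.1))
  legal v l _ hp := nxtF_legal W N A _ hp

lemma theStrat_based : (theStrat W N A).BasedOn N :=
  ⟨nxtF W N A, fun _ _ _ _ => rfl⟩

end Strat

/-- If Player 1 has any winning strategy from `v`, then `(v, contAfter W [])`
is in the attractor. -/
lemma attr_of_winning {A₀ : Set (List C)} (hW : W = ReachObj A₀) {A : Arena C} {v : A.V}
    (σ' : A.Strategy) (hwin : σ'.WinningFrom W v) : Attr A v (contAfter W []) := by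
  by_contra hNA
  -- build an escaping play
  classical
  -- an escape step
  have hstep : ∀ l : List (A.V × C × A.V), A.HistFrom v l →
      ¬ Attr A (A.endFrom v l) (contAfter W (l.map fun e => e.2.1)) →
      ∃ e, e ∈ A.E ∧ e.1 = A.endFrom v l ∧
        (A.P1 (A.endFrom v l) → e = σ'.next v l) ∧
        ¬ Attr A e.2.2 (contAfter W ((l ++ [e]).map fun e => e.2.1)) := by
    intro l hl hA
    have hsnoc : ∀ e : A.V × C × A.V,
        contAfter W ((l ++ [e]).map fun e => e.2.1)
          = dstep (contAfter W (l.map fun e => e.2.1)) e.2.1 := by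
      intro e
      rw [List.map_append, List.map_singleton, contAfter_snoc]
    by_cases h1 : A.P1 (A.endFrom v l)
    · obtain ⟨he, hsrc⟩ := σ'.legal v l hl h1
      refine ⟨σ'.next v l, he, hsrc, fun _ => rfl, ?_⟩
      rw [hsnoc]
      exact not_attr_p1 h1 hA _ he hsrc
    · obtain ⟨e, he, hsrc, hA'⟩ := not_attr_p2 h1 hA
      refine ⟨e, he, hsrc, fun h => absurd h h1, ?_⟩
      rw [hsnoc]; exact hA'
  -- iterate
  let ESt := {l : List (A.V × C × A.V) //
    A.HistFrom v l ∧ ¬ Attr A (A.endFrom v l) (contAfter W (l.map fun e => e.2.1))}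
  let step : ESt → ESt := fun s =>
    ⟨s.val ++ [(hstep s.val s.2.1 s.2.2).choose],
      histFrom_append s.2.1 (hstep s.val s.2.1 s.2.2).choose_spec.1
        (hstep s.val s.2.1 s.2.2).choose_spec.2.1,
      by rw [endFrom_append]; exact (hstep s.val s.2.1 s.2.2).choose_spec.2.2.2⟩
  let g : ℕ → ESt := fun n => step^[n] ⟨[], trivial, by simpa [Arena.endFrom] using hNA⟩
  let π : ℕ → A.V × C × A.V := fun n => (hstep (g n).val (g n).2.1 (g n).2.2).choose
  have hg_succ : ∀ n, (g (n+1)).val = (g n).val ++ [π n] := by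
    intro n
    show (step^[n+1] _).val = _
    rw [Function.iterate_succ_apply']
  have hpref : ∀ n, (List.ofFn fun i : Fin n => π i) = (g n).val := by
    intro n
    induction n with
    | zero => rfl
    | succ n ih => rw [prefE_succ, ih, hg_succ]
  have hspec : ∀ n, π n ∈ A.E ∧ (π n).1 = A.endFrom v (g n).val ∧
      (A.P1 (A.endFrom v (g n).val) → π n = σ'.next v (g n).val) :=
    fun n => ⟨(hstep (g n).val (g n).2.1 (g n).2.2).choose_spec.1,
      (hstep (g n).val (g n).2.1 (g n).2.2).choose_spec.2.1,
      (hstep (g n).val (g n).2.1 (g n).2.2).choose_spec.2.2.1⟩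
  have hplay : A.PlayFrom v π := by
    constructor
    · rw [(hspec 0).2.1]; rfl
    · intro n
      refine ⟨(hspec n).1, ?_⟩
      rw [(hspec (n+1)).2.1, hg_succ, endFrom_append]
  have hcons : σ'.Consistent v π := by
    intro n h1
    rw [hpref n] at h1 ⊢
    exact (hspec n).2.2 h1
  have hnW := hwin π hplay hcons
  rw [mem_W_iff_reach hW] at hnW
  obtain ⟨k, hk⟩ := hnW
  have : contAfter W ((g k).val.map fun e => e.2.1) = Set.univ := by
    rw [← hpref k, colors_prefE]
    exact hk
  exact (g k).2.2 (attr_univ this _)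

/-- Main winning lemma for the constructed strategy. -/
lemma theStrat_win {A₀ : Set (List C)} (hW : W = ReachObj A₀) (hreg : FinClasses W)
    (hNfin : Finite N.M) (hSM : StronglyMonotone N W) (hPC : ProgressConsistent N W)
    {A : Arena C} {v : A.V} (hv : Attr A v (contAfter W [])) :
    (theStrat W N A).WinningFrom W v := by
  classical
  intro π hplay hcons
  by_contra hx
  set x : ℕ → C := Arena.playCol π with hxdef
  -- configurations
  set vn : ℕ → A.V := fun n => A.endFrom v (List.ofFn fun i : Fin n => π i) with hvn
  set mn : ℕ → N.M := fun n => N.updStar N.init (pref x n) with hmn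
  set qn : ℕ → Set (ℕ → C) := fun n => contAfter W (pref x n) with hqn
  have hq_ne : ∀ n, qn n ≠ Set.univ := by
    intro n h
    exact hx (mem_W_of_pref_univ h)
  have hcol : ∀ n, (π n).2.1 = x n := fun n => rfl
  have hv_succ : ∀ n, vn (n+1) = (π n).2.2 := by
    intro n
    show A.endFrom v (List.ofFn fun i : Fin (n+1) => π i) = (π n).2.2
    rw [prefE_succ, endFrom_append]
  have hq_succ : ∀ n, qn (n+1) = dstep (qn n) (x n) := by
    intro n
    show contAfter W (pref x (n+1)) = dstep (contAfter W (pref x n)) (x n)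
    rw [pref_succ, contAfter_snoc]
  have hm_succ : ∀ n, mn (n+1) = N.upd (mn n) (x n) := by
    intro n
    show N.updStar N.init (pref x (n+1)) = N.upd (N.updStar N.init (pref x n)) (x n)
    rw [pref_succ, updStar_append]
    rfl
  -- step invariants
  have hInvStep : ∀ n, Attr A (vn n) (qn n) →
      (Attr A (vn (n+1)) (qn (n+1)) ∧
       Attr A (vn (n+1)) (dstep (pse W N A (vn n) (mn n)) (x n)) ∧
       rk A (vn (n+1)) (dstep (pse W N A (vn n) (mn n)) (x n)) <
         rk A (vn n) (pse W N A (vn n) (mn n))) := by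
    intro n hAttr
    have hqw : qn n ∈ QW W N A (vn n) (mn n) := ⟨⟨pref x n, rfl, rfl⟩, hAttr⟩
    obtain ⟨hpmem, hpleast⟩ := pse_spec W N A hSM hreg ⟨qn n, hqw⟩
    set p := pse W N A (vn n) (mn n) with hp
    have hpq : p ⊆ qn n := hpleast _ hqw
    have hp_ne : p ≠ Set.univ := by
      intro h
      exact hq_ne n (Set.univ_subset_iff.mp (h ▸ hpq))
    have hpAttr : Attr A (vn n) p := hpmem.2
    have hend : A.endFrom v (List.ofFn fun i : Fin n => π i) = vn n := rfl
    by_cases h1 : A.P1 (vn n)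
    · -- Player 1 moves: the strategy plays an attractor edge for p
      have hπ : π n = nxtF W N A (vn n) (mn n) := by
        have h2 := hcons n h1
        rw [h2]
        show nxtF W N A (A.endFrom v (List.ofFn fun i : Fin n => π i))
          (N.updStar N.init ((List.ofFn fun i : Fin n => π i).map fun e => e.2.1))
            = nxtF W N A (vn n) (mn n)
        rw [colors_prefE]
      have h2 : ∃ e, e ∈ A.E ∧ e.1 = vn n ∧
          Attr A e.2.2 (dstep p e.2.1) ∧
          rk A e.2.2 (dstep p e.2.1) < rk A (vn n) p :=
        attr_p1_step hpAttr h1 hp_ne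
      have hstep := nxtF_step W N A h1 h2
      rw [← hπ] at hstep
      rw [hcol n] at hstep
      rw [← hv_succ n] at hstep
      refine ⟨?_, hstep.1, hstep.2⟩
      rw [hq_succ n]
      exact attr_mono_set (dstep_mono hpq (x n)) hstep.1
    · -- Player 2 moves: every edge decreases the rank
      have hsrc : (π n).1 = vn n := (play_prefix_hist hplay n).2.symm
      have hstep := attr_p2_step hpAttr h1 hp_ne (π n) (hplay.2 n).1 hsrc
      rw [hcol n, ← hv_succ n] at hstep
      refine ⟨?_, hstep.1, hstep.2⟩
      rw [hq_succ n]
      exact attr_mono_set (dstep_mono hpq (x n)) hstep.1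
  have hInv : ∀ n, Attr A (vn n) (qn n) := by
    intro n
    induction n with
    | zero => exact hv
    | succ n ih => exact (hInvStep n ih).1
  set P : ℕ → Set (ℕ → C) := fun n => pse W N A (vn n) (mn n) with hP
  have hqw : ∀ n, qn n ∈ QW W N A (vn n) (mn n) :=
    fun n => ⟨⟨pref x n, rfl, rfl⟩, hInv n⟩
  have hPspec : ∀ n, P n ∈ QW W N A (vn n) (mn n) ∧
      ∀ S' ∈ QW W N A (vn n) (mn n), P n ⊆ S' :=
    fun n => pse_spec W N A hSM hreg ⟨qn n, hqw n⟩
  have hPq : ∀ n, P n ⊆ qn n := fun n => (hPspec n).2 _ (hqw n)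
  have hrk : ∀ n, rk A (vn (n+1)) (dstep (P n) (x n)) < rk A (vn n) (P n) :=
    fun n => (hInvStep n (hInv n)).2.2
  have hAstep : ∀ n, Attr A (vn (n+1)) (dstep (P n) (x n)) :=
    fun n => (hInvStep n (hInv n)).2.1
  have hstepQW : ∀ n, dstep (P n) (x n) ∈ QW W N A (vn (n+1)) (mn (n+1)) := by
    intro n
    obtain ⟨⟨w, hw1, hw2⟩, _⟩ := (hPspec n).1
    refine ⟨⟨w ++ [x n], ?_, ?_⟩, hAstep n⟩
    · rw [updStar_append, hw1, hm_succ n]; rfl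
    · rw [contAfter_snoc, hw2]
  have hPstep : ∀ n, P (n+1) ⊆ dstep (P n) (x n) :=
    fun n => (hPspec (n+1)).2 _ (hstepQW n)
  -- the set of "drop" times
  set D : Set ℕ := {n | P (n+1) ≠ dstep (P n) (x n)} with hD
  by_cases hDfin : D.Finite
  · -- eventually only equality steps: infinite rank descent
    obtain ⟨Nb, hNb⟩ := hDfin.bddAbove
    have : ∀ i, rk A (vn (Nb + 1 + (i+1))) (P (Nb + 1 + (i+1))) <
        rk A (vn (Nb + 1 + i)) (P (Nb + 1 + i)) := by
      intro i
      have hnot : Nb + 1 + i ∉ D := fun h => by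
        have := hNb h; omega
      have heq : P (Nb + 1 + i + 1) = dstep (P (Nb + 1 + i)) (x (Nb + 1 + i)) := by
        by_contra hne
        exact hnot hne
      have := hrk (Nb + 1 + i)
      rw [← heq] at this
      have harith : Nb + 1 + (i + 1) = Nb + 1 + i + 1 := by omega
      rw [harith]
      exact this
    exact no_ordinal_descent (fun i => rk A (vn (Nb + 1 + i)) (P (Nb + 1 + i))) this
  · -- infinitely many drops: pigeonhole and progress consistency
    have hDinf : D.Infinite := hDfin
    have : Infinite ↥D := Set.infinite_coe_iff.mpr hDinf
    have hPr : ∀ n, P n ∈ Set.range fun w : List C => contAfter W w := by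
      intro n
      obtain ⟨⟨w, _, hw2⟩, _⟩ := (hPspec n).1
      exact ⟨w, hw2⟩
    have hqr : ∀ n, qn n ∈ Set.range fun w : List C => contAfter W w :=
      fun n => ⟨pref x n, rfl⟩
    have : Finite ↥(Set.range fun w : List C => contAfter W w) := hreg.to_subtype
    obtain ⟨d₁, d₂, hne, heq⟩ := Finite.exists_ne_map_eq_of_infinite
      (fun d : ↥D => ((mn (d.val + 1), ⟨P (d.val + 1), hPr _⟩, ⟨qn (d.val + 1), hqr _⟩) :
        N.M × ↥(Set.range fun w : List C => contAfter W w) ×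
          ↥(Set.range fun w : List C => contAfter W w)))
    have hvalne : d₁.val ≠ d₂.val := fun h => hne (Subtype.ext h)
    -- order them
    obtain ⟨k, k', hkk', hkD, hk'D, hmeq, hPeq, hqeq⟩ :
        ∃ k k', k < k' ∧ k ∈ D ∧ k' ∈ D ∧ mn (k+1) = mn (k'+1) ∧
          P (k+1) = P (k'+1) ∧ qn (k+1) = qn (k'+1) := by
      simp only [Prod.mk.injEq, Subtype.mk.injEq] at heq
      rcases lt_or_gt_of_ne hvalne with h | h
      · exact ⟨d₁, d₂, h, d₁.2, d₂.2, heq.1, heq.2.1, heq.2.2⟩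
      · exact ⟨d₂, d₁, h, d₂.2, d₁.2, heq.1.symm, heq.2.1.symm, heq.2.2.symm⟩
    set u : List C := List.ofFn fun i : Fin (k' - k) => x (k + 1 + i) with hu
    have hu_len : u.length = k' - k := by
      rw [hu]; simp
    have hu_ne : u ≠ [] := by
      intro h
      rw [h] at hu_len
      simp at hu_len
      omega
    have hprefu : pref x (k' + 1) = pref x (k + 1) ++ u := by
      have h1 : k + 1 + (k' - k) = k' + 1 := by omega
      rw [← h1, pref_add]
    -- memory loops on u
    have hmloop : N.updStar (mn (k+1)) u = mn (k+1) := by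
      conv_rhs => rw [hmeq]
      rw [hmn]
      simp only []
      rw [hprefu, updStar_append]
    -- actual class loops on u
    have hqloop : dlist (qn (k+1)) u = qn (k+1) := by
      conv_rhs => rw [hqeq]
      rw [hqn]
      simp only []
      rw [hprefu, contAfter_append]
    -- forward inclusion of the P-sequence
    have hfwd : ∀ j, P (k + 1 + j) ⊆ dlist (P (k+1)) (List.ofFn fun i : Fin j => x (k+1+i)) := by
      intro j
      induction j with
      | zero => simp
      | succ j ih =>
        have hsnoc : (List.ofFn fun i : Fin (j+1) => x (k+1+i))
            = (List.ofFn fun i : Fin j => x (k+1+i)) ++ [x (k+1+j)] := by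
          simpa [List.concat_eq_append] using
            List.ofFn_succ' (fun i : Fin (j+1) => x (k+1+(i:ℕ)))
        rw [hsnoc, dlist_append]
        have harith : k + 1 + (j+1) = (k + 1 + j) + 1 := by omega
        rw [harith]
        calc P ((k + 1 + j) + 1) ⊆ dstep (P (k+1+j)) (x (k+1+j)) := hPstep _
          _ ⊆ dlist (dlist (P (k+1)) (List.ofFn fun i : Fin j => x (k+1+i))) [x (k+1+j)] :=
              dstep_mono (ih) _
    have hfwd' : P (k+1) ⊆ dlist (P (k+1)) u := by
      have := hfwd (k' - k)
      have harith : k + 1 + (k' - k) = k' + 1 := by omega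
      rw [harith] at this
      rw [← hPeq] at this
      exact this
    -- strictness
    set u₁ : List C := List.ofFn fun i : Fin (k' - k - 1) => x (k + 1 + i) with hu₁
    have hprefu₁ : pref x k' = pref x (k + 1) ++ u₁ := by
      have h1 : k + 1 + (k' - k - 1) = k' := by omega
      rw [← h1, pref_add]
    have hstrict : P (k+1) ≠ dlist (P (k+1)) u := by
      intro hEq
      -- decompose u = u₁ ++ [x k']
      have hu_decomp : u = u₁ ++ [x k'] := by
        apply List.append_cancel_left (as := pref x (k+1))
        rw [← hprefu, ← List.append_assoc, ← hprefu₁, ← pref_succ]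
      have hmid : P k' ⊆ dlist (P (k+1)) u₁ := by
        have := hfwd (k' - k - 1)
        have harith : k + 1 + (k' - k - 1) = k' := by omega
        rw [harith] at this
        rw [hu₁]
        exact this
      have hchain : dstep (P k') (x k') ⊆ dlist (P (k+1)) u := by
        rw [hu_decomp, dlist_append]
        exact dstep_mono hmid _
      have hsub1 : P (k'+1) ⊆ dstep (P k') (x k') := hPstep k'
      have : P (k'+1) = dstep (P k') (x k') := by
        apply Set.Subset.antisymm hsub1
        calc dstep (P k') (x k') ⊆ dlist (P (k+1)) u := hchain
          _ = P (k+1) := hEq.symm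
          _ = P (k'+1) := hPeq
      exact hk'D this
    -- apply progress consistency
    obtain ⟨⟨w', hw'1, hw'2⟩, _⟩ := (hPspec (k+1)).1
    have hlt : prefLt W w' (w' ++ u) := by
      constructor
      · show contAfter W w' ⊆ contAfter W (w' ++ u)
        rw [contAfter_append, hw'2]
        exact hfwd'
      · intro hle
        apply hstrict
        apply Set.Subset.antisymm hfwd'
        rw [← hw'2, ← contAfter_append]
        exact hle
    have hPCres := hPC (mn (k+1)) w' u hw'1 (by rw [hmloop]) hlt
    -- wpow u ∈ contAfter W w' = P (k+1)
    have hmem : wpow u ∈ contAfter W w' := hPCres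
    rw [mem_contAfter_iff_reach hW] at hmem
    obtain ⟨k₀, hk₀⟩ := hmem
    -- extend the prefix of wpow u to a full power of u
    have htake := pref_wpow_take hu_ne k₀
    have hsplit : upow u k₀ = pref (wpow u) k₀ ++ (upow u k₀).drop k₀ := by
      rw [htake, List.take_append_drop]
    have huniv : contAfter W (w' ++ upow u k₀) = Set.univ := by
      rw [hsplit, ← List.append_assoc]
      exact contAfter_univ_absorb W hk₀ _
    have hdP : dlist (P (k+1)) (upow u k₀) = Set.univ := by
      rw [← hw'2, ← contAfter_append]
      exact huniv
    have hdq : dlist (qn (k+1)) (upow u k₀) = qn (k+1) :=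
      dlist_upow_self hqloop k₀
    have : qn (k+1) = Set.univ := by
      apply Set.univ_subset_iff.mp
      rw [← hdP, ← hdq]
      exact dlist_mono (hPq (k+1)) _
    exact hq_ne (k+1) this

/-- The constructed strategy is optimal. -/
lemma theStrat_optimal {A₀ : Set (List C)} (hW : W = ReachObj A₀) (hreg : FinClasses W)
    (hNfin : Finite N.M) (hSM : StronglyMonotone N W) (hPC : ProgressConsistent N W)
    (A : Arena C) : (theStrat W N A).Optimal W := by
  intro v ⟨σ', hwin⟩
  exact theStrat_win hW hreg hNfin hSM hPC (attr_of_winning hW σ' hwin)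

end Sufficiency

end RegularMemory
namespace RegularMemory

section ForcedPlay

open Arena

variable {C : Type} {A : Arena C} {sv : A.V} {ep : ℕ → A.V × C × A.V} {endp : ℕ → A.V}

lemma ep_end (h0 : endp 0 = sv) (hstep : ∀ n, endp (n+1) = (ep n).2.2) :
    ∀ n, A.endFrom sv (List.ofFn fun i : Fin n => ep i) = endp n := by
  intro n
  induction n with
  | zero => exact h0.symm
  | succ n ih => rw [prefE_succ, endFrom_append, hstep]

lemma ep_hist (h0 : endp 0 = sv) (hstep : ∀ n, endp (n+1) = (ep n).2.2)
    (hE : ∀ n, ep n ∈ A.E) (hsrc : ∀ n, (ep n).1 = endp n) :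
    ∀ n, A.HistFrom sv (List.ofFn fun i : Fin n => ep i) := by
  intro n
  induction n with
  | zero => trivial
  | succ n ih =>
    rw [prefE_succ]
    exact histFrom_append ih (hE n) (by rw [hsrc n, ep_end h0 hstep])

lemma forced_play_play (σ : A.Strategy) (h0 : endp 0 = sv)
    (hstep : ∀ n, endp (n+1) = (ep n).2.2)
    (hE : ∀ n, ep n ∈ A.E) (hsrc : ∀ n, (ep n).1 = endp n)
    (hP1 : ∀ n, A.P1 (endp n) → σ.next sv (List.ofFn fun i : Fin n => ep i) = ep n) :
    A.PlayFrom sv ep ∧ σ.Consistent sv ep := by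
  constructor
  · exact ⟨by rw [hsrc 0, h0], fun n => ⟨hE n, by rw [hsrc (n+1), hstep]⟩⟩
  · intro n h1
    rw [ep_end h0 hstep] at h1
    exact (hP1 n h1).symm

lemma forced_play_eq (σ : A.Strategy) (h0 : endp 0 = sv)
    (hstep : ∀ n, endp (n+1) = (ep n).2.2)
    (hE : ∀ n, ep n ∈ A.E) (hsrc : ∀ n, (ep n).1 = endp n)
    (hP1 : ∀ n, A.P1 (endp n) → σ.next sv (List.ofFn fun i : Fin n => ep i) = ep n)
    (hP2 : ∀ n, ¬ A.P1 (endp n) → ∀ e, e ∈ A.E → e.1 = endp n → e = ep n)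
    (π : ℕ → A.V × C × A.V) (hplay : A.PlayFrom sv π) (hcons : σ.Consistent sv π) :
    π = ep := by
  have key : ∀ n, ∀ i < n, π i = ep i := by
    intro n
    induction n with
    | zero => omega
    | succ n ih =>
      intro i hi
      rcases Nat.lt_or_ge i n with h | h
      · exact ih i h
      · have hin : i = n := by omega
        subst hin
        have hpe : (List.ofFn fun j : Fin i => π j) = (List.ofFn fun j : Fin i => ep j) := by
          apply List.ext_getElem
          · simp
          · intro k h1 h2
            simp only [List.getElem_ofFn]
            exact ih k (by simpa using h1)
        have hend : A.endFrom sv (List.ofFn fun j : Fin i => π j) = endp i := by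
          rw [hpe, ep_end h0 hstep]
        by_cases h1 : A.P1 (endp i)
        · have := hcons i (by rw [hend]; exact h1)
          rw [this, hpe]
          exact hP1 i h1
        · have hsrcπ : (π i).1 = endp i := by
            rw [← hend]
            exact (play_prefix_hist hplay i).2.symm
          exact hP2 i h1 (π i) (hplay.2 i).1 hsrcπ
  funext n
  exact key (n+1) n (Nat.lt_succ_self n)

end ForcedPlay

section NecessitySM

open Arena

variable {C : Type}

/-- Vertex type for the strong-monotonicity arena. -/
abbrev VA := (Fin 2 × ℕ) ⊕ (Unit ⊕ (Fin 2 × ℕ))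

def vin (j : Fin 2) (i : ℕ) : VA := Sum.inl (j, i)
def vt : VA := Sum.inr (Sum.inl ())
def vout (j : Fin 2) (i : ℕ) : VA := Sum.inr (Sum.inr (j, i))

lemma vin_ne_vt (j : Fin 2) (i : ℕ) : vin j i ≠ vt := by simp [vin, vt]
lemma vout_ne_vt (j : Fin 2) (i : ℕ) : vout j i ≠ vt := by simp [vout, vt]
lemma vout_ne_vin (j j' : Fin 2) (i i' : ℕ) : vout j i ≠ vin j' i' := by simp [vout, vin]

variable (w : Fin 2 → List C) (x : Fin 2 → ℕ → C)

/-- Target of the `i`-th input edge of spine `j`. -/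
def tinA (j : Fin 2) (i : ℕ) : VA :=
  if i + 1 < (w j).length then vin j (i+1) else vt

def inEdgeA (j : Fin 2) (i : ℕ) : VA × C × VA :=
  (vin j i, (w j).getD i (x 0 0), tinA w j i)

def tEdgeA (b : Fin 2) : VA × C × VA := (vt, x b 0, vout b 1)

def outEdgeA (b : Fin 2) (i : ℕ) : VA × C × VA := (vout b i, x b i, vout b (i+1))

def EAset : Set (VA × C × VA) :=
  {e | (∃ j i, i < (w j).length ∧ e = inEdgeA w x j i) ∨
       (∃ j, e = tEdgeA x j) ∨
       (∃ j i, e = outEdgeA x j (i+1))}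

@[reducible]
def arenaA : Arena C where
  V := VA
  P1 v := v = vt
  E := EAset w x
  succ v hv := ⟨tEdgeA x 0, Or.inr (Or.inl ⟨0, rfl⟩), by rw [hv]; rfl⟩

def svA (j : Fin 2) : (arenaA w x).V := if (w j).length = 0 then vt else vin j 0

/-- The input history along spine `j`. -/
def ihistA (j : Fin 2) : List (VA × C × VA) :=
  List.ofFn fun i : Fin (w j).length => inEdgeA w x j i

lemma inputHistA (j : Fin 2) :
    ∀ k, k ≤ (w j).length →
      (arenaA w x).HistFrom (svA w x j) (List.ofFn fun i : Fin k => inEdgeA w x j i) ∧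
      (arenaA w x).endFrom (svA w x j) (List.ofFn fun i : Fin k => inEdgeA w x j i)
        = (if k < (w j).length then vin j k else vt) := by
  intro k
  induction k with
  | zero =>
    intro _
    constructor
    · trivial
    · show svA w x j = _
      rw [svA]
      rcases Nat.eq_zero_or_pos (w j).length with h | h
      · rw [if_pos h, if_neg (by omega)]
      · rw [if_neg (by omega), if_pos (by omega)]
  | succ k ih =>
    intro hk
    have hkL : k < (w j).length := by omega
    obtain ⟨ihh, ihe⟩ := ih (le_of_lt hkL)
    have hsnoc : (List.ofFn fun i : Fin (k+1) => inEdgeA w x j i)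
        = (List.ofFn fun i : Fin k => inEdgeA w x j i) ++ [inEdgeA w x j k] :=
      prefE_succ (A := arenaA w x) (fun n => inEdgeA w x j n) k
    rw [hsnoc]
    have hmem : inEdgeA w x j k ∈ (arenaA w x).E := Or.inl ⟨j, k, hkL, rfl⟩
    have hsrc : (inEdgeA w x j k).1 = (arenaA w x).endFrom (svA w x j)
        (List.ofFn fun i : Fin k => inEdgeA w x j i) := by
      rw [ihe, if_pos hkL]; rfl
    constructor
    · exact histFrom_append ihh hmem hsrc
    · rw [endFrom_append]
      show tinA w j k = _
      rw [tinA]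

lemma ihistA_hist (j : Fin 2) :
    (arenaA w x).HistFrom (svA w x j) (ihistA w x j) ∧
    (arenaA w x).endFrom (svA w x j) (ihistA w x j) = vt := by
  obtain ⟨h1, h2⟩ := inputHistA w x j (w j).length (le_refl _)
  rw [if_neg (lt_irrefl _)] at h2
  constructor
  · rw [ihistA]; exact h1
  · rw [ihistA]; exact h2

lemma ihistA_colors (j : Fin 2) :
    (ihistA w x j).map (fun e => e.2.1) = w j := by
  rw [ihistA, List.map_ofFn]
  apply List.ext_getElem
  · simp
  · intro i h1 h2
    rw [List.getElem_ofFn]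
    show (w j).getD i (x 0 0) = (w j)[i]
    rw [List.getD_eq_getElem (w j) _ h2]

/-- The forced play in `arenaA` for a strategy choosing branch `b` at `vt`. -/
lemma arenaA_forced (σ : (arenaA w x).Strategy) (j b : Fin 2)
    (hσt : σ.next (svA w x j) (ihistA w x j) = tEdgeA x b) :
    ∃ π, (arenaA w x).PlayFrom (svA w x j) π ∧ σ.Consistent (svA w x j) π ∧
      Arena.playCol π = wcat (w j) (x b) ∧
      ∀ π', (arenaA w x).PlayFrom (svA w x j) π' → σ.Consistent (svA w x j) π' → π' = π := by
  classical
  set L := (w j).length with hL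
  set ep : ℕ → VA × C × VA := fun n =>
    if n < L then inEdgeA w x j n else if n = L then tEdgeA x b else outEdgeA x b (n - L)
    with hep
  set endp : ℕ → VA := fun n =>
    if n < L then vin j n else if n = L then vt else vout b (n - L) with hendp
  have h0 : endp 0 = svA w x j := by
    rw [hendp, svA]
    simp only []
    split_ifs <;> first | rfl | (exfalso; omega)
  have hstep : ∀ n, endp (n+1) = (ep n).2.2 := by
    intro n
    rw [hendp, hep]
    simp only [inEdgeA, tEdgeA, outEdgeA, tinA, ← hL]
    split_ifs <;> first | rfl | (exfalso; omega) | (show vout b _ = vout b _; congr 1; omega)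
  have hE : ∀ n, ep n ∈ (arenaA w x).E := by
    intro n
    rw [hep]
    simp only []
    rcases Nat.lt_trichotomy n L with h | h | h
    · rw [if_pos h]; exact Or.inl ⟨j, n, h, rfl⟩
    · rw [if_neg (by omega), if_pos h]; exact Or.inr (Or.inl ⟨b, rfl⟩)
    · rw [if_neg (by omega), if_neg (by omega)]
      refine Or.inr (Or.inr ⟨b, n - L - 1, ?_⟩)
      have : n - L - 1 + 1 = n - L := by omega
      rw [this]
  have hsrc : ∀ n, (ep n).1 = endp n := by
    intro n
    rw [hendp, hep]
    simp only [inEdgeA, tEdgeA, outEdgeA]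
    split_ifs <;> rfl
  have hendp_vt : ∀ n, endp n = vt → n = L := by
    intro n h
    rw [hendp] at h
    simp only [] at h
    rcases Nat.lt_trichotomy n L with h' | h' | h'
    · rw [if_pos h'] at h; exact absurd h (vin_ne_vt j n)
    · exact h'
    · rw [if_neg (by omega), if_neg (by omega)] at h
      exact absurd h (vout_ne_vt b (n - L))
  have hprefL : (List.ofFn fun i : Fin L => ep i) = ihistA w x j := by
    rw [ihistA]
    apply List.ext_getElem
    · simp [hL]
    · intro k h1 h2
      simp only [List.getElem_ofFn]
      rw [hep]
      simp only []
      rw [if_pos (by simpa using h1)]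
  have hP1 : ∀ n, (arenaA w x).P1 (endp n) →
      σ.next (svA w x j) (List.ofFn fun i : Fin n => ep i) = ep n := by
    intro n h1
    have hn : n = L := hendp_vt n h1
    subst hn
    rw [hprefL, hσt, hep]
    simp only []
    split_ifs <;> first | rfl | (exfalso; omega)
  have hP2 : ∀ n, ¬ (arenaA w x).P1 (endp n) →
      ∀ e, e ∈ (arenaA w x).E → e.1 = endp n → e = ep n := by
    intro n h1 e he hesrc
    have hnL : n ≠ L := fun h => h1 (by rw [hendp]; simp only []; rw [h, if_neg (lt_irrefl _), if_pos rfl])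
    rcases Nat.lt_trichotomy n L with h | h | h
    · have hend : endp n = vin j n := by rw [hendp]; simp only []; rw [if_pos h]
      rw [hend] at hesrc
      rcases he with ⟨j', i', hi', rfl⟩ | ⟨j', rfl⟩ | ⟨j', i', rfl⟩
      · have : (j', i') = (j, n) := by
          have : Sum.inl (j', i') = Sum.inl (j, n) := hesrc
          simpa using this
        have hj : j' = j := by simpa using congrArg Prod.fst this
        have hi : i' = n := by simpa using congrArg Prod.snd this
        subst hj; subst hi
        rw [hep]; simp only []; rw [if_pos h]
      · exfalso; exact absurd hesrc (fun hcon => by injection hcon)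
      · exfalso; exact absurd hesrc (fun hcon => by injection hcon)
    · exact absurd h hnL
    · have hend : endp n = vout b (n - L) := by
        rw [hendp]; simp only []; rw [if_neg (by omega), if_neg (by omega)]
      rw [hend] at hesrc
      rcases he with ⟨j', i', hi', rfl⟩ | ⟨j', rfl⟩ | ⟨j', i', rfl⟩
      · exfalso; exact absurd hesrc (fun hcon => by injection hcon)
      · exfalso; exact absurd hesrc (fun hcon => by injection hcon with h2; injection h2)
      · have : (j', i' + 1) = (b, n - L) := by
          have : Sum.inr (Sum.inr (j', i'+1)) = Sum.inr (Sum.inr (b, n - L)) := hesrc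
          simpa using this
        have hj : j' = b := by simpa using congrArg Prod.fst this
        have hi : i' + 1 = n - L := by simpa using congrArg Prod.snd this
        subst hj
        rw [hep]; simp only []; rw [if_neg (by omega), if_neg (by omega), ← hi]
  obtain ⟨hplay, hcons⟩ := forced_play_play σ h0 hstep hE hsrc hP1
  refine ⟨ep, hplay, hcons, ?_, fun π' hp hc => forced_play_eq σ h0 hstep hE hsrc hP1 hP2 π' hp hc⟩
  funext n
  show (ep n).2.1 = wcat (w j) (x b) n
  rw [hep]
  simp only []
  rcases Nat.lt_trichotomy n L with h | h | h
  · rw [if_pos h, wcat_lt (by rw [← hL]; exact h)]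
    show (w j).getD n (x 0 0) = _
    rw [List.getD_eq_getElem (w j) _ (by rw [← hL]; exact h)]
  · rw [if_neg (by omega), if_pos h, wcat_ge (by omega)]
    show x b 0 = x b (n - (w j).length)
    rw [← hL]; congr 1; omega
  · rw [if_neg (by omega), if_neg (by omega), wcat_ge (by omega)]
    show x b (n - L) = x b (n - (w j).length)
    rw [← hL]

end NecessitySM

end RegularMemory
namespace RegularMemory

section NecessitySM2

open Arena

variable {C : Type} [Nonempty C]

lemma necessity_SM {N : MemStruct C} {W : Set (ℕ → C)}
    (hSuff : SufficesIn N W (fun _ => True)) : StronglyMonotone N W := by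
  intro wa wb hst
  by_contra hcomp
  rw [PrefComparable] at hcomp
  push_neg at hcomp
  obtain ⟨h1, h2⟩ := hcomp
  obtain ⟨xa, hxa, hxa'⟩ := Set.not_subset.mp h1
  obtain ⟨xb, hxb, hxb'⟩ := Set.not_subset.mp h2
  set w : Fin 2 → List C := ![wa, wb] with hw
  set x : Fin 2 → ℕ → C := ![xa, xb] with hx
  obtain ⟨σ, ⟨nxtf, hnxtf⟩, hopt⟩ := hSuff (arenaA w x) trivial
  -- the memory state reached after both input spines
  set m : N.M := N.updStar N.init wa with hm
  have hmw : ∀ j : Fin 2, N.updStar N.init (w j) = m := by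
    intro j
    fin_cases j
    · simp [hw, hm]
    · simp [hw, hm]; exact hst.symm
  -- the strategy's choice at vt
  have hP1vt : (arenaA w x).P1 vt := rfl
  have hchoice : ∀ j : Fin 2, σ.next (svA w x j) (ihistA w x j) = nxtf vt m := by
    intro j
    have hh := (ihistA_hist w x j).1
    have he := (ihistA_hist w x j).2
    have := hnxtf (svA w x j) (ihistA w x j) hh (by rw [he])
    have hcolj : List.map (fun e : (arenaA w x).V × C × (arenaA w x).V => e.2.1)
        (ihistA w x j) = w j := ihistA_colors w x j
    rw [this, he, hcolj, hmw]
  -- the choice is one of the two branch edges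
  obtain ⟨b, hb⟩ : ∃ b : Fin 2, nxtf vt m = tEdgeA x b := by
    have hh := (ihistA_hist w x 0).1
    have he := (ihistA_hist w x 0).2
    obtain ⟨hE, hsrc⟩ := σ.legal (svA w x 0) (ihistA w x 0) hh (by rw [he])
    rw [hchoice 0] at hE hsrc
    rw [he] at hsrc
    rcases hE with ⟨j', i', hi', hEq⟩ | ⟨j', hEq⟩ | ⟨j', i', hEq⟩
    · exfalso
      rw [hEq] at hsrc
      exact absurd hsrc (fun hcon => by injection hcon)
    · exact ⟨j', hEq⟩
    · exfalso
      rw [hEq] at hsrc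
      exact absurd hsrc (fun hcon => by injection hcon with hcon2; injection hcon2)
  -- forced play of σ from sv j
  have hforced : ∀ j : Fin 2, ∃ π, (arenaA w x).PlayFrom (svA w x j) π ∧
      σ.Consistent (svA w x j) π ∧ Arena.playCol π = wcat (w j) (x b) ∧
      ∀ π', (arenaA w x).PlayFrom (svA w x j) π' → σ.Consistent (svA w x j) π' → π' = π :=
    fun j => arenaA_forced w x σ j b (by rw [hchoice j, hb])
  -- Player 1 can win from sv j by choosing branch j
  have hwinnable : ∀ j : Fin 2, ∃ σ' : (arenaA w x).Strategy,
      σ'.WinningFrom W (svA w x j) := by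
    intro j
    refine ⟨⟨fun _ _ => tEdgeA x j, ?_⟩, ?_⟩
    · intro v l _ hp
      exact ⟨Or.inr (Or.inl ⟨j, rfl⟩), hp.symm⟩
    · intro π hplay hcons
      obtain ⟨π₀, hp₀, hc₀, hcol₀, huniq₀⟩ :=
        arenaA_forced w x ⟨fun _ _ => tEdgeA x j, fun v l _ hp => ⟨Or.inr (Or.inl ⟨j, rfl⟩), hp.symm⟩⟩
          j j rfl
      rw [huniq₀ π hplay hcons]
      show Arena.playCol π₀ ∈ W
      rw [hcol₀]
      have : x j ∈ contAfter W (w j) := by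
        fin_cases j
        · simpa [hw, hx] using hxa
        · simpa [hw, hx] using hxb
      exact this
  -- σ is winning from both starting vertices
  have hwin : ∀ j : Fin 2, wcat (w j) (x b) ∈ W := by
    intro j
    obtain ⟨π, hplay, hcons, hcol, _⟩ := hforced j
    have := hopt (svA w x j) (hwinnable j) π hplay hcons
    rwa [hcol] at this
  -- contradiction
  fin_cases b
  · have := hwin 1
    simp only [hx, hw] at this
    exact hxa' this
  · have := hwin 0
    simp only [hx, hw] at this
    exact hxb' this

end NecessitySM2

end RegularMemory
namespace RegularMemory

section NecessityPC

open Arena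

variable {C : Type} [Nonempty C]

abbrev VB := ℕ ⊕ (ℕ ⊕ ℕ)

def bin (i : ℕ) : VB := Sum.inl i
def bloop (i : ℕ) : VB := Sum.inr (Sum.inl i)
def bout (i : ℕ) : VB := Sum.inr (Sum.inr i)
def bt : VB := bloop 0

variable (w₁ w₂ : List C) (z : ℕ → C)

def binEdge (i : ℕ) : VB × C × VB :=
  (bin i, w₁.getD i (z 0), if i + 1 < w₁.length then bin (i+1) else bt)

def loopEdge (i : ℕ) : VB × C × VB :=
  (bloop i, w₂.getD i (z 0), if i + 1 < w₂.length then bloop (i+1) else bt)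

def exitEdge : VB × C × VB := (bt, z 0, bout 1)

def outEdgeB (i : ℕ) : VB × C × VB := (bout i, z i, bout (i+1))

def EBset : Set (VB × C × VB) :=
  {e | (∃ i, i < w₁.length ∧ e = binEdge w₁ z i) ∨
       (∃ i, i < w₂.length ∧ e = loopEdge w₂ z i) ∨
       e = exitEdge z ∨
       (∃ i, e = outEdgeB z (i+1))}

@[reducible]
def arenaB : Arena C where
  V := VB
  P1 v := v = bt
  E := EBset w₁ w₂ z
  succ v hv := ⟨exitEdge z, Or.inr (Or.inr (Or.inl rfl)), by rw [hv]; rfl⟩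

def svB : (arenaB w₁ w₂ z).V := if w₁.length = 0 then bt else bin 0

def ihistB : List (VB × C × VB) := List.ofFn fun i : Fin w₁.length => binEdge w₁ z i

-- basic vertex disambiguation
lemma bin_ne_bt (i : ℕ) : bin i ≠ bt := fun h => by injection h
lemma bout_ne_bt (i : ℕ) : bout i ≠ bt := fun h => by injection h with h2; injection h2
lemma bloop_eq_bt {i : ℕ} (h : bloop i = bt) : i = 0 := by
  injection h with h2; injection h2

-- unique outgoing edges at Player-2 vertices
lemma uniq_bin {n : ℕ} (hn : n < w₁.length) {e : VB × C × VB}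
    (he : e ∈ EBset w₁ w₂ z) (hsrc : e.1 = bin n) : e = binEdge w₁ z n := by
  rcases he with ⟨i, hi, rfl⟩ | ⟨i, hi, rfl⟩ | rfl | ⟨i, rfl⟩
  · have : i = n := by
      have h := hsrc
      rw [binEdge] at h
      injection h
    rw [this]
  · exfalso; exact absurd hsrc (fun h => by injection h)
  · exfalso; exact absurd hsrc (fun h => by injection h)
  · exfalso; exact absurd hsrc (fun h => by injection h)

lemma uniq_bloop {i : ℕ} (hi : i < w₂.length) (hi0 : i ≠ 0) {e : VB × C × VB}
    (he : e ∈ EBset w₁ w₂ z) (hsrc : e.1 = bloop i) : e = loopEdge w₂ z i := by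
  rcases he with ⟨i', hi', rfl⟩ | ⟨i', hi', rfl⟩ | rfl | ⟨i', rfl⟩
  · exfalso; exact absurd hsrc (fun h => by injection h)
  · have : i' = i := by
      have h := hsrc
      rw [loopEdge] at h
      injection h with h2; injection h2
    rw [this]
  · exfalso
    have : i = 0 := by
      have h := hsrc
      rw [exitEdge] at h
      exact bloop_eq_bt h.symm
    exact hi0 this
  · exfalso; exact absurd hsrc (fun h => by injection h with h2; injection h2)

lemma uniq_bout {i : ℕ} (hi : 1 ≤ i) {e : VB × C × VB}
    (he : e ∈ EBset w₁ w₂ z) (hsrc : e.1 = bout i) : e = outEdgeB z i := by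
  rcases he with ⟨i', hi', rfl⟩ | ⟨i', hi', rfl⟩ | rfl | ⟨i', rfl⟩
  · exfalso; exact absurd hsrc (fun h => by injection h)
  · exfalso; exact absurd hsrc (fun h => by injection h with h2; injection h2)
  · exfalso; exact absurd hsrc (fun h => by injection h with h2; injection h2)
  · have : i' + 1 = i := by
      have h := hsrc
      rw [outEdgeB] at h
      injection h with h2; injection h2
    rw [this]

lemma from_bt (hK : 0 < w₂.length) {e : VB × C × VB}
    (he : e ∈ EBset w₁ w₂ z) (hsrc : e.1 = bt) :
    e = loopEdge w₂ z 0 ∨ e = exitEdge z := by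
  rcases he with ⟨i', hi', rfl⟩ | ⟨i', hi', rfl⟩ | rfl | ⟨i', rfl⟩
  · exfalso; exact absurd hsrc (fun h => by injection h)
  · left
    have : i' = 0 := bloop_eq_bt hsrc
    rw [this]
  · right; rfl
  · exfalso; exact absurd hsrc (fun h => by injection h with h2; injection h2)

lemma inputHistB :
    ∀ k, k ≤ w₁.length →
      (arenaB w₁ w₂ z).HistFrom (svB w₁ w₂ z) (List.ofFn fun i : Fin k => binEdge w₁ z i) ∧
      (arenaB w₁ w₂ z).endFrom (svB w₁ w₂ z) (List.ofFn fun i : Fin k => binEdge w₁ z i)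
        = (if k < w₁.length then bin k else bt) := by
  intro k
  induction k with
  | zero =>
    intro _
    constructor
    · trivial
    · show svB w₁ w₂ z = _
      rw [svB]
      split_ifs <;> first | rfl | (exfalso; omega)
  | succ k ih =>
    intro hk
    have hkL : k < w₁.length := by omega
    obtain ⟨ihh, ihe⟩ := ih (le_of_lt hkL)
    have hsnoc : (List.ofFn fun i : Fin (k+1) => binEdge w₁ z i)
        = (List.ofFn fun i : Fin k => binEdge w₁ z i) ++ [binEdge w₁ z k] :=
      prefE_succ (A := arenaB w₁ w₂ z) (fun n => binEdge w₁ z n) k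
    rw [hsnoc]
    have hmem : binEdge w₁ z k ∈ (arenaB w₁ w₂ z).E := Or.inl ⟨k, hkL, rfl⟩
    have hsrc : (binEdge w₁ z k).1 = (arenaB w₁ w₂ z).endFrom (svB w₁ w₂ z)
        (List.ofFn fun i : Fin k => binEdge w₁ z i) := by
      rw [ihe, if_pos hkL]; rfl
    constructor
    · exact histFrom_append ihh hmem hsrc
    · rw [endFrom_append]
      show (if k + 1 < w₁.length then bin (k+1) else bt) = _
      rfl

lemma ihistB_hist :
    (arenaB w₁ w₂ z).HistFrom (svB w₁ w₂ z) (ihistB w₁ z) ∧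
    (arenaB w₁ w₂ z).endFrom (svB w₁ w₂ z) (ihistB w₁ z) = bt := by
  obtain ⟨h1, h2⟩ := inputHistB w₁ w₂ z w₁.length (le_refl _)
  rw [if_neg (lt_irrefl _)] at h2
  constructor
  · rw [ihistB]; exact h1
  · rw [ihistB]; exact h2

lemma ihistB_colors : (ihistB w₁ z).map (fun e => e.2.1) = w₁ := by
  rw [ihistB, List.map_ofFn]
  apply List.ext_getElem
  · simp
  · intro i h1 h2
    rw [List.getElem_ofFn]
    show w₁.getD i (z 0) = w₁[i]
    rw [List.getD_eq_getElem w₁ _ h2]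

end NecessityPC

end RegularMemory
namespace RegularMemory

section NecessityPC2

open Arena

variable {C : Type} [Nonempty C]

lemma mod_succ_lt {a K : ℕ} (hK : 0 < K) (h : a % K + 1 < K) : (a+1) % K = a % K + 1 := by
  conv_lhs => rw [show a + 1 = (a % K + 1) + K * (a / K) by
    have := Nat.div_add_mod a K; omega]
  rw [Nat.add_mul_mod_self_left, Nat.mod_eq_of_lt h]

lemma mod_succ_eq {a K : ℕ} (hK : 0 < K) (h : a % K + 1 = K) : (a+1) % K = 0 := by
  conv_lhs => rw [show a + 1 = K * (a / K) + K by have := Nat.div_add_mod a K; omega]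
  rw [show K * (a/K) + K = K * (a/K + 1) by ring]
  exact Nat.mul_mod_right _ _

variable (w₁ w₂ : List C) (z : ℕ → C)

/-- Forced play when the strategy exits at `bt`. -/
lemma arenaB_forced_exit (σ : (arenaB w₁ w₂ z).Strategy)
    (hσt : σ.next (svB w₁ w₂ z) (ihistB w₁ z) = exitEdge z) :
    ∃ π, (arenaB w₁ w₂ z).PlayFrom (svB w₁ w₂ z) π ∧ σ.Consistent (svB w₁ w₂ z) π ∧
      Arena.playCol π = wcat w₁ z ∧
      ∀ π', (arenaB w₁ w₂ z).PlayFrom (svB w₁ w₂ z) π' →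
        σ.Consistent (svB w₁ w₂ z) π' → π' = π := by
  classical
  set L := w₁.length with hL
  set ep : ℕ → VB × C × VB := fun n =>
    if n < L then binEdge w₁ z n else if n = L then exitEdge z else outEdgeB z (n - L)
    with hep
  set endp : ℕ → VB := fun n =>
    if n < L then bin n else if n = L then bt else bout (n - L) with hendp
  have hep_lt : ∀ n, n < L → ep n = binEdge w₁ z n := fun n h => by
    rw [hep]; simp only []; rw [if_pos h]
  have hep_eq : ep L = exitEdge z := by
    rw [hep]; simp only []; rw [if_neg (lt_irrefl _)]; simp
  have hep_gt : ∀ n, L < n → ep n = outEdgeB z (n - L) := fun n h => by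
    rw [hep]; simp only []; rw [if_neg (by omega), if_neg (by omega)]
  have hendp_lt : ∀ n, n < L → endp n = bin n := fun n h => by
    rw [hendp]; simp only []; rw [if_pos h]
  have hendp_eq : endp L = bt := by
    rw [hendp]; simp only []; rw [if_neg (lt_irrefl _)]; simp
  have hendp_gt : ∀ n, L < n → endp n = bout (n - L) := fun n h => by
    rw [hendp]; simp only []; rw [if_neg (by omega), if_neg (by omega)]
  have h0 : endp 0 = svB w₁ w₂ z := by
    rw [svB]
    rcases Nat.eq_zero_or_pos L with h | h
    · rw [if_pos (by omega), ← h, hendp_eq]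
    · rw [if_neg (by omega), hendp_lt 0 h]
  have hstep : ∀ n, endp (n+1) = (ep n).2.2 := by
    intro n
    rcases Nat.lt_trichotomy (n+1) L with h | h | h
    · rw [hendp_lt _ h, hep_lt n (by omega)]
      show bin (n+1) = if n + 1 < w₁.length then bin (n+1) else bt
      rw [if_pos (by omega)]
    · have hgoal : endp (n+1) = bt := by rw [h, hendp_eq]
      rw [hgoal, hep_lt n (by omega)]
      show bt = if n + 1 < w₁.length then bin (n+1) else bt
      rw [if_neg (by omega)]
    · rw [hendp_gt _ (by omega)]
      rcases Nat.lt_trichotomy n L with h' | h' | h'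
      · omega
      · rw [h', hep_eq]
        show bout (L + 1 - L) = bout 1
        congr 1; omega
      · rw [hep_gt _ h']
        show bout (n + 1 - L) = bout (n - L + 1)
        congr 1; omega
  have hE : ∀ n, ep n ∈ (arenaB w₁ w₂ z).E := by
    intro n
    rcases Nat.lt_trichotomy n L with h | h | h
    · rw [hep_lt _ h]; exact Or.inl ⟨n, h, rfl⟩
    · rw [h, hep_eq]; exact Or.inr (Or.inr (Or.inl rfl))
    · rw [hep_gt _ h]
      refine Or.inr (Or.inr (Or.inr ⟨n - L - 1, ?_⟩))
      have : n - L - 1 + 1 = n - L := by omega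
      rw [this]
  have hsrc : ∀ n, (ep n).1 = endp n := by
    intro n
    rcases Nat.lt_trichotomy n L with h | h | h
    · rw [hep_lt _ h, hendp_lt _ h]; rfl
    · rw [h, hep_eq, hendp_eq]; rfl
    · rw [hep_gt _ h, hendp_gt _ h]; rfl
  have hendp_bt : ∀ n, endp n = bt → n = L := by
    intro n h
    rcases Nat.lt_trichotomy n L with h' | h' | h'
    · rw [hendp_lt _ h'] at h; exact absurd h (bin_ne_bt n)
    · exact h'
    · rw [hendp_gt _ h'] at h; exact absurd h (bout_ne_bt _)
  have hprefL : (List.ofFn fun i : Fin L => ep i) = ihistB w₁ z := by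
    rw [ihistB]
    apply List.ext_getElem
    · simp [hL]
    · intro k h1 h2
      simp only [List.getElem_ofFn]
      rw [hep_lt k (by simpa using h1)]
  have hP1 : ∀ n, (arenaB w₁ w₂ z).P1 (endp n) →
      σ.next (svB w₁ w₂ z) (List.ofFn fun i : Fin n => ep i) = ep n := by
    intro n h1
    have hn : n = L := hendp_bt n h1
    subst hn
    rw [hprefL, hσt, hep_eq]
  have hP2 : ∀ n, ¬ (arenaB w₁ w₂ z).P1 (endp n) →
      ∀ e, e ∈ (arenaB w₁ w₂ z).E → e.1 = endp n → e = ep n := by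
    intro n h1 e he hesrc
    have hnL : n ≠ L := fun h => h1 (by rw [h, hendp_eq])
    rcases Nat.lt_trichotomy n L with h | h | h
    · rw [hendp_lt _ h] at hesrc
      rw [hep_lt _ h]
      exact uniq_bin w₁ w₂ z h he hesrc
    · exact absurd h hnL
    · rw [hendp_gt _ h] at hesrc
      rw [hep_gt _ h]
      exact uniq_bout w₁ w₂ z (by omega) he hesrc
  obtain ⟨hplay, hcons⟩ := forced_play_play σ h0 hstep hE hsrc hP1
  refine ⟨ep, hplay, hcons, ?_, fun π' hp hc => forced_play_eq σ h0 hstep hE hsrc hP1 hP2 π' hp hc⟩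
  funext n
  show (ep n).2.1 = wcat w₁ z n
  rcases Nat.lt_trichotomy n L with h | h | h
  · rw [hep_lt _ h, wcat_lt (show n < w₁.length from h)]
    show w₁.getD n (z 0) = _
    rw [List.getD_eq_getElem w₁ _ h]
  · rw [h, hep_eq, wcat_ge (by omega)]
    show z 0 = z (L - w₁.length)
    congr 1; omega
  · rw [hep_gt _ h, wcat_ge (by omega)]
    rfl

/-- Forced play when the strategy loops at `bt` on every aligned visit. -/
lemma arenaB_forced_loop (σ : (arenaB w₁ w₂ z).Strategy) (hK : 0 < w₂.length)
    (hσ : ∀ l, (arenaB w₁ w₂ z).HistFrom (svB w₁ w₂ z) l →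
      (arenaB w₁ w₂ z).endFrom (svB w₁ w₂ z) l = bt →
      l.map (fun e => e.2.1) = w₁ ++ upow w₂ ((l.length - w₁.length) / w₂.length) →
      σ.next (svB w₁ w₂ z) l = loopEdge w₂ z 0) :
    ∃ π, (arenaB w₁ w₂ z).PlayFrom (svB w₁ w₂ z) π ∧ σ.Consistent (svB w₁ w₂ z) π ∧
      Arena.playCol π = wcat w₁ (wpow w₂) ∧
      ∀ π', (arenaB w₁ w₂ z).PlayFrom (svB w₁ w₂ z) π' →
        σ.Consistent (svB w₁ w₂ z) π' → π' = π := by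
  classical
  set L := w₁.length with hL
  set K := w₂.length with hKdef
  have hw₂ : w₂ ≠ [] := by
    intro h; rw [h] at hKdef; simp at hKdef; omega
  set ep : ℕ → VB × C × VB := fun n =>
    if n < L then binEdge w₁ z n else loopEdge w₂ z ((n - L) % K) with hep
  set endp : ℕ → VB := fun n =>
    if n < L then bin n else bloop ((n - L) % K) with hendp
  have hep_lt : ∀ n, n < L → ep n = binEdge w₁ z n := fun n h => by
    rw [hep]; simp only []; rw [if_pos h]
  have hep_ge : ∀ n, L ≤ n → ep n = loopEdge w₂ z ((n - L) % K) := fun n h => by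
    rw [hep]; simp only []; rw [if_neg (by omega)]
  have hendp_lt : ∀ n, n < L → endp n = bin n := fun n h => by
    rw [hendp]; simp only []; rw [if_pos h]
  have hendp_ge : ∀ n, L ≤ n → endp n = bloop ((n - L) % K) := fun n h => by
    rw [hendp]; simp only []; rw [if_neg (by omega)]
  have h0 : endp 0 = svB w₁ w₂ z := by
    rw [svB]
    rcases Nat.eq_zero_or_pos L with h | h
    · rw [if_pos (by omega), hendp_ge 0 (by omega)]
      show bloop ((0 - L) % K) = bt
      have h00 : 0 - L = 0 := by omega
      rw [h00, Nat.zero_mod]; rfl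
    · rw [if_neg (by omega), hendp_lt 0 h]
  have hstep : ∀ n, endp (n+1) = (ep n).2.2 := by
    intro n
    rcases Nat.lt_trichotomy (n+1) L with h | h | h
    · rw [hendp_lt _ h, hep_lt n (by omega)]
      show bin (n+1) = if n + 1 < w₁.length then bin (n+1) else bt
      rw [if_pos (by omega)]
    · rw [hendp_ge _ (by omega), hep_lt n (by omega)]
      show bloop ((n + 1 - L) % K) = if n + 1 < w₁.length then bin (n+1) else bt
      rw [if_neg (by omega)]
      have : (n + 1 - L) % K = 0 := by
        have : n + 1 - L = 0 := by omega
        rw [this]; exact Nat.zero_mod K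
      rw [this]; rfl
    · rw [hendp_ge _ (by omega), hep_ge n (by omega)]
      show bloop ((n + 1 - L) % K) =
        if (n - L) % K + 1 < w₂.length then bloop ((n - L) % K + 1) else bt
      have harith : n + 1 - L = (n - L) + 1 := by omega
      by_cases hc : (n - L) % K + 1 < K
      · rw [if_pos hc, harith, mod_succ_lt hK hc]
      · have hc' : (n - L) % K + 1 = K := by
          have := Nat.mod_lt (n - L) hK; omega
        rw [if_neg (by omega), harith, mod_succ_eq hK hc']
        rfl
  have hE : ∀ n, ep n ∈ (arenaB w₁ w₂ z).E := by
    intro n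
    rcases Nat.lt_or_ge n L with h | h
    · rw [hep_lt _ h]; exact Or.inl ⟨n, h, rfl⟩
    · rw [hep_ge _ h]
      exact Or.inr (Or.inl ⟨(n - L) % K, Nat.mod_lt _ hK, rfl⟩)
  have hsrc : ∀ n, (ep n).1 = endp n := by
    intro n
    rcases Nat.lt_or_ge n L with h | h
    · rw [hep_lt _ h, hendp_lt _ h]; rfl
    · rw [hep_ge _ h, hendp_ge _ h]; rfl
  -- colors
  have hcol : Arena.playCol ep = wcat w₁ (wpow w₂) := by
    funext n
    show (ep n).2.1 = wcat w₁ (wpow w₂) n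
    rcases Nat.lt_or_ge n L with h | h
    · rw [hep_lt _ h, wcat_lt (show n < w₁.length from h)]
      show w₁.getD n (z 0) = _
      rw [List.getD_eq_getElem w₁ _ h]
    · rw [hep_ge _ h, wcat_ge (by omega)]
      show w₂.getD ((n - L) % K) (z 0) = wpow w₂ (n - w₁.length)
      rw [List.getD_eq_getElem w₂ _ (Nat.mod_lt _ hK),
        wpow_eq_get hw₂ (n - w₁.length) (Nat.mod_lt _ hK)]
  have hP1 : ∀ n, (arenaB w₁ w₂ z).P1 (endp n) →
      σ.next (svB w₁ w₂ z) (List.ofFn fun i : Fin n => ep i) = ep n := by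
    intro n h1
    have hn : L ≤ n ∧ (n - L) % K = 0 := by
      rcases Nat.lt_or_ge n L with h | h
      · rw [hendp_lt _ h] at h1; exact absurd h1 (bin_ne_bt n)
      · rw [hendp_ge _ h] at h1
        exact ⟨h, bloop_eq_bt h1⟩
    have hmap : (List.ofFn fun i : Fin n => ep i).map (fun e => e.2.1)
        = w₁ ++ upow w₂ (((List.ofFn fun i : Fin n => ep i).length - w₁.length) / w₂.length) := by
      have hc : List.map (fun e : VB × C × VB => e.2.1) (List.ofFn fun i : Fin n => ep i)
          = pref (Arena.playCol ep) n := colors_prefE (A := arenaB w₁ w₂ z) ep n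
      rw [hc, hcol]
      have hlen : (List.ofFn fun i : Fin n => ep i).length = n := by simp
      rw [hlen]
      have hn' : n = w₁.length + (n - L) := by omega
      conv_lhs => rw [hn']
      rw [pref_wcat_full]
      congr 1
      have hdvd : (n - L) / K * K = n - L := Nat.div_mul_cancel (Nat.dvd_of_mod_eq_zero hn.2)
      conv_lhs => rw [show n - L = (n - L) / K * K from hdvd.symm]
      exact pref_wpow_mul hw₂ ((n - L) / K)
    have := hσ (List.ofFn fun i : Fin n => ep i)
      (ep_hist h0 hstep hE hsrc n)
      (by rw [ep_end h0 hstep]; exact h1)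
      hmap
    rw [this, hep_ge _ hn.1, hn.2]
  have hP2 : ∀ n, ¬ (arenaB w₁ w₂ z).P1 (endp n) →
      ∀ e, e ∈ (arenaB w₁ w₂ z).E → e.1 = endp n → e = ep n := by
    intro n h1 e he hesrc
    rcases Nat.lt_or_ge n L with h | h
    · rw [hendp_lt _ h] at hesrc
      rw [hep_lt _ h]
      exact uniq_bin w₁ w₂ z h he hesrc
    · rw [hendp_ge _ h] at hesrc
      rw [hep_ge _ h]
      have hi0 : (n - L) % K ≠ 0 := by
        intro hc
        apply h1
        rw [hendp_ge _ h, hc]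
        rfl
      exact uniq_bloop w₁ w₂ z (Nat.mod_lt _ hK) hi0 he hesrc
  obtain ⟨hplay, hcons⟩ := forced_play_play σ h0 hstep hE hsrc hP1
  exact ⟨ep, hplay, hcons, hcol,
    fun π' hp hc => forced_play_eq σ h0 hstep hE hsrc hP1 hP2 π' hp hc⟩

end NecessityPC2

end RegularMemory
namespace RegularMemory

section NecessityPC3

open Arena

variable {C : Type} [Nonempty C]

variable (w₁ w₂ : List C) (z : ℕ → C)

/-- The strategy that loops once through `w₂` and then exits. -/
def sigmaPrime (hK : 0 < w₂.length) : (arenaB w₁ w₂ z).Strategy where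
  next _ l := if l.length < w₁.length + w₂.length then loopEdge w₂ z 0 else exitEdge z
  legal v l hl hp := by
    constructor
    · show (if l.length < w₁.length + w₂.length then loopEdge w₂ z 0 else exitEdge z)
        ∈ (arenaB w₁ w₂ z).E
      split_ifs
      · exact Or.inr (Or.inl ⟨0, hK, rfl⟩)
      · exact Or.inr (Or.inr (Or.inl rfl))
    · have hbt : (arenaB w₁ w₂ z).endFrom v l = bt := hp
      show (if l.length < w₁.length + w₂.length then loopEdge w₂ z 0 else exitEdge z).1 = _
      split_ifs
      · show bloop 0 = _
        rw [hbt]; rfl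
      · show bt = _
        rw [hbt]

lemma sigmaPrime_winning (hK : 0 < w₂.length) (W : Set (ℕ → C))
    (hz : z ∈ contAfter W (w₁ ++ w₂)) :
    (sigmaPrime w₁ w₂ z hK).WinningFrom W (svB w₁ w₂ z) := by
  classical
  set L := w₁.length with hL
  set K := w₂.length with hKdef
  set ep : ℕ → VB × C × VB := fun n =>
    if n < L then binEdge w₁ z n
    else if n < L + K then loopEdge w₂ z (n - L)
    else if n = L + K then exitEdge z
    else outEdgeB z (n - (L + K)) with hep
  set endp : ℕ → VB := fun n =>
    if n < L then bin n
    else if n = L then bt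
    else if n < L + K then bloop (n - L)
    else if n = L + K then bt
    else bout (n - (L + K)) with hendp
  have hep_lt : ∀ n, n < L → ep n = binEdge w₁ z n := fun n h => by
    rw [hep]; simp only []; rw [if_pos h]
  have hep_mid : ∀ n, L ≤ n → n < L + K → ep n = loopEdge w₂ z (n - L) := fun n h h' => by
    rw [hep]; simp only []; rw [if_neg (by omega), if_pos h']
  have hep_exit : ep (L + K) = exitEdge z := by
    rw [hep]; simp only []; rw [if_neg (by omega), if_neg (by omega)]; simp
  have hep_out : ∀ n, L + K < n → ep n = outEdgeB z (n - (L + K)) := fun n h => by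
    rw [hep]; simp only []
    rw [if_neg (by omega), if_neg (by omega), if_neg (by omega)]
  have hendp_lt : ∀ n, n < L → endp n = bin n := fun n h => by
    rw [hendp]; simp only []; rw [if_pos h]
  have hendp_L : endp L = bt := by
    rw [hendp]; simp only []; rw [if_neg (by omega)]; simp
  have hendp_mid : ∀ n, L < n → n < L + K → endp n = bloop (n - L) := fun n h h' => by
    rw [hendp]; simp only []; rw [if_neg (by omega), if_neg (by omega), if_pos h']
  have hendp_LK : endp (L + K) = bt := by
    rw [hendp]; simp only []
    rw [if_neg (by omega), if_neg (by omega), if_neg (by omega)]; simp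
  have hendp_out : ∀ n, L + K < n → endp n = bout (n - (L + K)) := fun n h => by
    rw [hendp]; simp only []
    rw [if_neg (by omega), if_neg (by omega), if_neg (by omega), if_neg (by omega)]
  have h0 : endp 0 = svB w₁ w₂ z := by
    rw [svB]
    rcases Nat.eq_zero_or_pos L with h | h
    · have h0L : endp 0 = endp L := by rw [h]
      rw [if_pos (by omega), h0L, hendp_L]
    · rw [if_neg (by omega), hendp_lt 0 h]
  have hstep : ∀ n, endp (n+1) = (ep n).2.2 := by
    intro n
    rcases Nat.lt_trichotomy (n+1) L with h | h | h
    · rw [hendp_lt _ h, hep_lt n (by omega)]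
      show bin (n+1) = if n + 1 < w₁.length then bin (n+1) else bt
      rw [if_pos (by omega)]
    · have hgoal : endp (n+1) = bt := by rw [h, hendp_L]
      rw [hgoal, hep_lt n (by omega)]
      show bt = if n + 1 < w₁.length then bin (n+1) else bt
      rw [if_neg (by omega)]
    · -- n ≥ L
      rcases Nat.lt_trichotomy (n+1) (L + K) with h2 | h2 | h2
      · rw [hendp_mid _ (by omega) h2, hep_mid n (by omega) (by omega)]
        show bloop (n + 1 - L) = if n - L + 1 < w₂.length then bloop (n - L + 1) else bt
        rw [if_pos (by omega)]
        congr 1; omega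
      · have hgoal : endp (n+1) = bt := by rw [h2, hendp_LK]
        rw [hgoal, hep_mid n (by omega) (by omega)]
        show bt = if n - L + 1 < w₂.length then bloop (n - L + 1) else bt
        rw [if_neg (by omega)]
      · rcases Nat.lt_trichotomy n (L + K) with h3 | h3 | h3
        · omega
        · rw [hendp_out _ (by omega), h3, hep_exit]
          show bout (L + K + 1 - (L + K)) = bout 1
          congr 1; omega
        · rw [hendp_out _ (by omega), hep_out _ h3]
          show bout (n + 1 - (L + K)) = bout (n - (L + K) + 1)
          congr 1; omega
  have hE : ∀ n, ep n ∈ (arenaB w₁ w₂ z).E := by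
    intro n
    rcases Nat.lt_trichotomy n L with h | h | h
    · rw [hep_lt _ h]; exact Or.inl ⟨n, h, rfl⟩
    · rw [hep_mid n (by omega) (by omega)]
      exact Or.inr (Or.inl ⟨n - L, by omega, rfl⟩)
    · rcases Nat.lt_trichotomy n (L + K) with h2 | h2 | h2
      · rw [hep_mid n (by omega) h2]
        exact Or.inr (Or.inl ⟨n - L, by omega, rfl⟩)
      · rw [h2, hep_exit]; exact Or.inr (Or.inr (Or.inl rfl))
      · rw [hep_out _ h2]
        refine Or.inr (Or.inr (Or.inr ⟨n - (L + K) - 1, ?_⟩))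
        have : n - (L + K) - 1 + 1 = n - (L + K) := by omega
        rw [this]
  have hsrc : ∀ n, (ep n).1 = endp n := by
    intro n
    rcases Nat.lt_trichotomy n L with h | h | h
    · rw [hep_lt _ h, hendp_lt _ h]; rfl
    · rw [h, hep_mid L (le_refl _) (by omega), hendp_L]
      show bloop (L - L) = bt
      have : L - L = 0 := by omega
      rw [this]; rfl
    · rcases Nat.lt_trichotomy n (L + K) with h2 | h2 | h2
      · rw [hep_mid n (by omega) h2, hendp_mid n h h2]; rfl
      · rw [h2, hep_exit, hendp_LK]; rfl
      · rw [hep_out _ h2, hendp_out _ h2]; rfl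
  have hP1 : ∀ n, (arenaB w₁ w₂ z).P1 (endp n) →
      (sigmaPrime w₁ w₂ z hK).next (svB w₁ w₂ z) (List.ofFn fun i : Fin n => ep i) = ep n := by
    intro n h1
    have hn : n = L ∨ n = L + K := by
      rcases Nat.lt_trichotomy n L with h | h | h
      · rw [hendp_lt _ h] at h1; exact absurd h1 (bin_ne_bt n)
      · exact Or.inl h
      · rcases Nat.lt_trichotomy n (L + K) with h2 | h2 | h2
        · rw [hendp_mid n h h2] at h1
          have := bloop_eq_bt h1
          omega
        · exact Or.inr h2
        · rw [hendp_out _ h2] at h1; exact absurd h1 (bout_ne_bt _)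
    show (if (List.ofFn fun i : Fin n => ep i).length < w₁.length + w₂.length
      then loopEdge w₂ z 0 else exitEdge z) = ep n
    rw [List.length_ofFn]
    rcases hn with rfl | rfl
    · rw [if_pos (by omega), hep_mid L (le_refl _) (by omega)]
      have : L - L = 0 := by omega
      rw [this]
    · rw [if_neg (by omega), hep_exit]
  have hP2 : ∀ n, ¬ (arenaB w₁ w₂ z).P1 (endp n) →
      ∀ e, e ∈ (arenaB w₁ w₂ z).E → e.1 = endp n → e = ep n := by
    intro n h1 e he hesrc
    have hnL : n ≠ L := fun h => h1 (by rw [h, hendp_L])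
    have hnLK : n ≠ L + K := fun h => h1 (by rw [h, hendp_LK])
    rcases Nat.lt_trichotomy n L with h | h | h
    · rw [hendp_lt _ h] at hesrc
      rw [hep_lt _ h]
      exact uniq_bin w₁ w₂ z h he hesrc
    · exact absurd h hnL
    · rcases Nat.lt_trichotomy n (L + K) with h2 | h2 | h2
      · rw [hendp_mid n h h2] at hesrc
        rw [hep_mid n (by omega) h2]
        exact uniq_bloop w₁ w₂ z (by omega) (by omega) he hesrc
      · exact absurd h2 hnLK
      · rw [hendp_out _ h2] at hesrc
        rw [hep_out _ h2]
        exact uniq_bout w₁ w₂ z (by omega) he hesrc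
  have hcol : Arena.playCol ep = wcat (w₁ ++ w₂) z := by
    funext n
    show (ep n).2.1 = wcat (w₁ ++ w₂) z n
    rcases Nat.lt_trichotomy n L with h | h | h
    · rw [hep_lt _ h, wcat_lt (by rw [List.length_append]; omega)]
      show w₁.getD n (z 0) = _
      rw [List.getD_eq_getElem w₁ _ h, List.getElem_append_left h]
    · rw [hep_mid n (by omega) (by omega), wcat_lt (by rw [List.length_append]; omega)]
      show w₂.getD (n - L) (z 0) = _
      rw [List.getD_eq_getElem w₂ _ (by omega), List.getElem_append_right (by omega)]
    · rcases Nat.lt_trichotomy n (L + K) with h2 | h2 | h2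
      · rw [hep_mid n (by omega) h2, wcat_lt (by rw [List.length_append]; omega)]
        show w₂.getD (n - L) (z 0) = _
        rw [List.getD_eq_getElem w₂ _ (by omega), List.getElem_append_right (by omega)]
      · rw [h2, hep_exit, wcat_ge (by rw [List.length_append]; omega)]
        show z 0 = z (L + K - (w₁ ++ w₂).length)
        congr 1
        simp [hL, hKdef]
      · rw [hep_out _ h2, wcat_ge (by rw [List.length_append]; omega)]
        show z (n - (L + K)) = z (n - (w₁ ++ w₂).length)
        congr 1
        simp [hL, hKdef]
  intro π hplay hcons
  have := forced_play_eq (sigmaPrime w₁ w₂ z hK) h0 hstep hE hsrc hP1 hP2 π hplay hcons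
  rw [this]
  show Arena.playCol ep ∈ W
  rw [hcol]
  exact hz

lemma necessity_PC {N : MemStruct C} {W : Set (ℕ → C)}
    (hSuff : SufficesIn N W (fun _ => True)) : ProgressConsistent N W := by
  intro m w₁ w₂ hst hloop hlt
  by_contra hbad
  have hw₂ : w₂ ≠ [] := by
    intro h
    subst h
    rw [List.append_nil] at hlt
    exact hlt.2 hlt.1
  have hK : 0 < w₂.length := List.length_pos_iff.mpr hw₂
  obtain ⟨z, hz, hz'⟩ := Set.not_subset.mp hlt.2
  obtain ⟨σ, ⟨nxtf, hnxtf⟩, hopt⟩ := hSuff (arenaB w₁ w₂ z) trivial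
  have hmem : ∀ q, N.updStar N.init (w₁ ++ upow w₂ q) = m := by
    intro q
    induction q with
    | zero => rw [upow, List.append_nil]; exact hst
    | succ q ih => rw [upow, ← List.append_assoc, updStar_append, ih, hloop]
  have hh := (ihistB_hist w₁ w₂ z).1
  have hend := (ihistB_hist w₁ w₂ z).2
  have hP1bt : (arenaB w₁ w₂ z).P1 bt := rfl
  have hchoice0 : σ.next (svB w₁ w₂ z) (ihistB w₁ z) = nxtf bt m := by
    rw [hnxtf _ _ hh (by rw [hend]), hend]
    have hc : List.map (fun e : (arenaB w₁ w₂ z).V × C × (arenaB w₁ w₂ z).V => e.2.1)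
        (ihistB w₁ z) = w₁ := ihistB_colors w₁ z
    rw [hc, hst]
  obtain ⟨hEmem, hEsrc⟩ := σ.legal (svB w₁ w₂ z) (ihistB w₁ z) hh (by rw [hend])
  rw [hchoice0] at hEmem hEsrc
  rw [hend] at hEsrc
  have hwin := hopt (svB w₁ w₂ z)
    ⟨sigmaPrime w₁ w₂ z hK, sigmaPrime_winning w₁ w₂ z hK W hz⟩
  rcases from_bt w₁ w₂ z hK hEmem hEsrc with hloopcase | hexitcase
  · -- the strategy loops forever
    have hσ : ∀ l, (arenaB w₁ w₂ z).HistFrom (svB w₁ w₂ z) l →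
        (arenaB w₁ w₂ z).endFrom (svB w₁ w₂ z) l = bt →
        l.map (fun e => e.2.1) = w₁ ++ upow w₂ ((l.length - w₁.length) / w₂.length) →
        σ.next (svB w₁ w₂ z) l = loopEdge w₂ z 0 := by
      intro l hl he hc
      rw [hnxtf _ _ hl (by rw [he]), he]
      rw [hc, hmem, hloopcase]
    obtain ⟨π, hplay, hcons, hcol, _⟩ := arenaB_forced_loop w₁ w₂ z σ hK hσ
    have := hwin π hplay hcons
    rw [hcol] at this
    exact hbad this
  · -- the strategy exits immediately
    obtain ⟨π, hplay, hcons, hcol, _⟩ := arenaB_forced_exit w₁ w₂ z σ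
      (by rw [hchoice0]; exact hexitcase)
    have := hwin π hplay hcons
    rw [hcol] at this
    exact hz' this

end NecessityPC3

end RegularMemory


namespace RegularMemory

/-- characterization for regular reachability objectives: a finite
memory structure `N` suffices to play optimally for `W` in all arenas iff `W` is
`N`-strongly-monotone and `N`-progress-consistent. -/
theorem reachability_characterization {C : Type} [Nonempty C]
    (W : Set (ℕ → C))
    (hreach : ∃ A : Set (List C), W = ReachObj A)
    (hreg : FinClasses W)
    (N : MemStruct C) (hNfin : Finite N.M) :
    SufficesIn N W (fun _ => True) ↔
      StronglyMonotone N W ∧ ProgressConsistent N W := by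
  obtain ⟨A₀, hW⟩ := hreach
  constructor
  · intro hSuff
    exact ⟨necessity_SM hSuff, necessity_PC hSuff⟩
  · rintro ⟨hSM, hPC⟩ A _
    exact ⟨theStrat W N A, theStrat_based W N A, theStrat_optimal hW hreg hNfin hSM hPC A⟩

end RegularMemory
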